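/- arXiv:math/0208121 — 4 statements merged into one kernel-verified Lean document; each statement's English description precedes it below -/
import Mathlib

section
/- Let λ > 0 and let f ∈ L²(ℝ) be even with f = 0 a.e. on (−λ,λ) and ℱf = 0 a.e. on (−λ,λ). Then: (i) the integral F(s) = ∫₀^∞ f(t) t^{−s} dt converges absolutely for Re(s) > 1/2 and the integral G(s) = ∫₀^∞ (ℱf)(t) t^{−s} dt converges absolutely for Re(s) > 1/2; (ii) there exists an entire function Φ : ℂ → ℂ such that Φ(s) = π^{−s/2} Γ(s/2) F(s) for all s with Re(s) > 1/2 and Φ(s) = π^{−(1−s)/2} Γ((1−s)/2) G(1−s) for all s with Re(s) < 1/2. -/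
open MeasureTheory Complex Set FourierTransform

noncomputable section

/-- `F` is the Fourier–Plancherel transform on `L²(ℝ)`: the unitary operator agreeing with
the Fourier integral `x ↦ ∫ y, exp(2πixy) f y` on integrable square-integrable functions. -/
def IsFourierPlancherel
    (F : Lp ℂ 2 (volume : Measure ℝ) ≃ₗᵢ[ℂ] Lp ℂ 2 (volume : Measure ℝ)) : Prop :=
  ∀ (f : ℝ → ℂ) (_ : Integrable f volume) (hf : MemLp f 2 volume),
    (F (hf.toLp f) : ℝ → ℂ) =ᵐ[volume] (FourierTransformInv.fourierInv f : ℝ → ℂ)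

/-- `P_λ` : multiplication by the indicator function of `(-λ, λ)` on `L²(ℝ)`. -/
def Pproj (lam : ℝ) (f : Lp ℂ 2 (volume : Measure ℝ)) : Lp ℂ 2 (volume : Measure ℝ) :=
  ((Lp.memLp f).indicator (measurableSet_Ioo : MeasurableSet (Ioo (-lam) lam))).toLp _

namespace SonineProof

open Filter Asymptotics

/-- The Gaussian `exp(-π u t²)` as a complex-valued function of `t`. -/
def Eg (u t : ℝ) : ℂ := ((Real.exp (-Real.pi * u * t ^ 2) : ℝ) : ℂ)

lemma Eg_cexp (u t : ℝ) :
    Eg u t = Complex.exp (-(Real.pi : ℂ) * (u : ℂ) * (t : ℂ) ^ 2) := by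
  rw [Eg, Complex.ofReal_exp]
  norm_cast

lemma Eg_norm (u t : ℝ) : ‖Eg u t‖ = Real.exp (-Real.pi * u * t ^ 2) := by
  rw [Eg, Complex.norm_real, Real.norm_eq_abs, abs_of_pos (Real.exp_pos _)]

lemma Eg_conj (u t : ℝ) : (starRingEnd ℂ) (Eg u t) = Eg u t := Complex.conj_ofReal _

lemma Eg_neg (u t : ℝ) : Eg u (-t) = Eg u t := by simp [Eg]

lemma Eg_continuous (u : ℝ) : Continuous (Eg u) := by
  unfold Eg
  fun_prop

lemma Eg_continuous2 : Continuous (fun p : ℝ × ℝ => Eg p.1 p.2) := by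
  unfold Eg
  fun_prop

lemma Eg_memℒp {u : ℝ} (hu : 0 < u) : MemLp (Eg u) 2 volume := by
  rw [memLp_two_iff_integrable_sq_norm (Eg_continuous u).aestronglyMeasurable]
  have h : Integrable (fun t : ℝ => Real.exp (-(2 * Real.pi * u) * t ^ 2)) volume :=
    integrable_exp_neg_mul_sq (by positivity)
  refine h.congr (Eventually.of_forall fun t => ?_)
  show Real.exp (-(2 * Real.pi * u) * t ^ 2) = ‖Eg u t‖ ^ 2
  rw [Eg_norm, sq (Real.exp (-Real.pi * u * t ^ 2)), ← Real.exp_add]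
  congr 1
  ring

lemma Eg_integrable {u : ℝ} (hu : 0 < u) : Integrable (Eg u) volume := by
  have h : Integrable (fun t : ℝ => Real.exp (-(Real.pi * u) * t ^ 2)) volume :=
    integrable_exp_neg_mul_sq (by positivity)
  have h2 : Integrable (fun t : ℝ => ((Real.exp (-(Real.pi * u) * t ^ 2) : ℝ) : ℂ)) volume :=
    h.ofReal
  refine h2.congr (Eventually.of_forall fun t => ?_)
  show ((Real.exp (-(Real.pi * u) * t ^ 2) : ℝ) : ℂ) = Eg u t
  rw [Eg]
  congr 2
  ring

lemma mul_Eg_integrable {h : ℝ → ℂ} (hh : MemLp h 2 volume) {u : ℝ} (hu : 0 < u) :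
    Integrable (fun t => h t * Eg u t) volume := by
  have hsmul : MemLp (h • Eg u) 1 volume :=
    (Eg_memℒp hu).smul hh
  have : (h • Eg u) = fun t => h t * Eg u t := rfl
  rw [this] at hsmul
  exact memLp_one_iff_integrable.mp hsmul

/-- Square-integrable × square-integrable, weighted by `t^{-s}` on `(λ,∞)`:
the basic convergence statement. -/
lemma sonine_integrableOn {lam : ℝ} (hlam : 0 < lam) {h : ℝ → ℂ} (hh : MemLp h 2 volume)
    (h0 : ∀ᵐ x : ℝ, x ∈ Ioo (-lam) lam → h x = 0) {s : ℂ} (hs : 1 / 2 < s.re) :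
    IntegrableOn (fun t : ℝ => h t * (t : ℂ) ^ (-s)) (Ioi 0) volume := by
  have hcont : ContinuousOn (fun t : ℝ => (t : ℂ) ^ (-s)) (Ioi lam) := by
    refine continuousOn_of_forall_continuousAt fun t ht => ?_
    exact Complex.continuousAt_ofReal_cpow_const t (-s)
      (Or.inr (ne_of_gt (hlam.trans ht)))
  have hcpow2 : MemLp (fun t : ℝ => (t : ℂ) ^ (-s)) 2 (volume.restrict (Ioi lam)) := by
    rw [memLp_two_iff_integrable_sq_norm (hcont.aestronglyMeasurable measurableSet_Ioi)]
    have hint : IntegrableOn (fun t : ℝ => t ^ (-(2 * s.re))) (Ioi lam) volume :=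
      integrableOn_Ioi_rpow_of_lt (by linarith) hlam
    refine hint.congr_fun (fun t ht => ?_) measurableSet_Ioi
    have ht0 : (0 : ℝ) < t := hlam.trans ht
    rw [Complex.norm_cpow_eq_rpow_re_of_pos ht0, Complex.neg_re,
      sq, ← Real.rpow_add ht0]
    congr 1
    ring
  have hmul : IntegrableOn (fun t : ℝ => h t * (t : ℂ) ^ (-s)) (Ioi lam) volume := by
    have hsmul : MemLp (h • fun t : ℝ => (t : ℂ) ^ (-s)) 1 (volume.restrict (Ioi lam)) :=
      hcpow2.smul (hh.restrict (Ioi lam))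
    have : (h • fun t : ℝ => (t : ℂ) ^ (-s)) = fun t => h t * (t : ℂ) ^ (-s) := rfl
    rw [this] at hsmul
    exact memLp_one_iff_integrable.mp hsmul
  have hzero : IntegrableOn (fun t : ℝ => h t * (t : ℂ) ^ (-s)) (Ioc 0 lam) volume := by
    have hne : (fun t : ℝ => h t * (t : ℂ) ^ (-s))
        =ᵐ[volume.restrict (Ioc 0 lam)] (fun _ => 0) := by
      have h2 : ∀ᵐ t : ℝ ∂volume, t ∉ ({lam} : Set ℝ) :=
        compl_mem_ae_iff.mpr (measure_singleton lam)
      filter_upwards [ae_restrict_mem measurableSet_Ioc, ae_restrict_of_ae h0,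
        ae_restrict_of_ae h2] with t ht hv hne
      have : t ∈ Ioo (-lam) lam := by
        constructor
        · linarith [ht.1]
        · exact lt_of_le_of_ne ht.2 (by simpa using hne)
      rw [hv this, zero_mul]
    exact (integrable_zero _ _ _).congr hne.symm
  have := hzero.union hmul
  rwa [Ioc_union_Ioi_eq_Ioi hlam.le] at this

/-- Exponential decay of the Gaussian pairing for functions vanishing on `(-λ,λ)`. -/
lemma theta_decay {lam : ℝ} (hlam : 0 < lam) {h : ℝ → ℂ} (hh : MemLp h 2 volume)
    (h0 : ∀ᵐ x : ℝ, x ∈ Ioo (-lam) lam → h x = 0) {u : ℝ} (hu : 1 ≤ u) :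
    ‖∫ t : ℝ, h t * Eg u t‖ ≤
      (∫ t : ℝ, ‖h t * Eg 1 t‖) * Real.exp (-(Real.pi * lam ^ 2) * (u - 1)) := by
  have hint1 : Integrable (fun t => ‖h t * Eg 1 t‖) volume :=
    (mul_Eg_integrable hh one_pos).norm
  have hb : Integrable
      (fun t => ‖h t * Eg 1 t‖ * Real.exp (-(Real.pi * lam ^ 2) * (u - 1))) volume :=
    hint1.mul_const (Real.exp (-(Real.pi * lam ^ 2) * (u - 1)))
  refine le_trans (norm_integral_le_of_norm_le hb ?_) (le_of_eq (integral_mul_const _ _))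
  · filter_upwards [h0] with t ht
    by_cases hmem : t ∈ Ioo (-lam) lam
    · rw [ht hmem, zero_mul, norm_zero]
      positivity
    · have ht2 : lam ^ 2 ≤ t ^ 2 := by
        rw [mem_Ioo, not_and_or, not_lt, not_lt] at hmem
        rcases hmem with h1 | h1 <;> nlinarith
      rw [norm_mul, norm_mul, Eg_norm, Eg_norm]
      calc ‖h t‖ * Real.exp (-Real.pi * u * t ^ 2)
          ≤ ‖h t‖ * (Real.exp (-Real.pi * 1 * t ^ 2)
              * Real.exp (-(Real.pi * lam ^ 2) * (u - 1))) := by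
            gcongr
            rw [← Real.exp_add, Real.exp_le_exp]
            nlinarith [mul_nonneg (mul_nonneg Real.pi_pos.le (sub_nonneg.mpr hu))
              (sub_nonneg.mpr ht2)]
        _ = ‖h t‖ * Real.exp (-Real.pi * 1 * t ^ 2)
              * Real.exp (-(Real.pi * lam ^ 2) * (u - 1)) := by ring

end SonineProof

namespace SonineProof

open Filter Asymptotics

/-- The Plancherel/Gaussian duality: pairing with a Gaussian of parameter `u` equals
`u^{-1/2}` times the pairing of the Fourier transform with the dual Gaussian. -/
lemma theta_plancherel (F : Lp ℂ 2 (volume : Measure ℝ) ≃ₗᵢ[ℂ] Lp ℂ 2 (volume : Measure ℝ))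
    (hF : IsFourierPlancherel F) (g : Lp ℂ 2 (volume : Measure ℝ)) {u : ℝ} (hu : 0 < u) :
    ∫ t : ℝ, g t * Eg u t
      = ((u ^ (-(1 / 2) : ℝ) : ℝ) : ℂ) * ∫ t : ℝ, (F g) t * Eg u⁻¹ t := by
  set Glp := (Eg_memℒp hu).toLp (Eg u) with hGlpdef
  have h1 : (inner ℂ Glp g : ℂ) = ∫ t : ℝ, g t * Eg u t := by
    rw [L2.inner_def]
    refine integral_congr_ae ?_
    filter_upwards [(Eg_memℒp hu).coeFn_toLp] with t ht
    rw [RCLike.inner_apply']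
    rw [show (Glp : ℝ → ℂ) t = Eg u t from ht, starRingEnd_apply, ← starRingEnd_apply,
      Eg_conj, mul_comm]
  have h2 : (inner ℂ (F Glp) (F g) : ℂ) = inner ℂ Glp g := F.inner_map_map Glp g
  have hFG : (F Glp : ℝ → ℂ) =ᵐ[volume]
      fun t => ((u ^ (-(1 / 2) : ℝ) : ℝ) : ℂ) * Eg u⁻¹ t := by
    refine (hF (Eg u) (Eg_integrable hu) (Eg_memℒp hu)).trans
      (Eventually.of_forall fun t => ?_)
    have hEg : Eg u = fun x : ℝ => Complex.exp (-(Real.pi : ℂ) * (u : ℂ) * (x : ℂ) ^ 2) :=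
      funext (Eg_cexp u)
    rw [Real.fourierInv_eq_fourier_neg, hEg,
      fourier_gaussian_pi (by simpa using hu)]
    dsimp only
    have h12 : ((u : ℂ) ^ (1 / 2 : ℂ)) = ((u ^ (1 / 2 : ℝ) : ℝ) : ℂ) := by
      rw [Complex.ofReal_cpow hu.le]
      norm_num
    have harg : -(Real.pi : ℂ) / (u : ℂ) * ((-t : ℝ) : ℂ) ^ 2
        = ((-Real.pi * u⁻¹ * t ^ 2 : ℝ) : ℂ) := by
      push_cast
      ring
    rw [h12, harg, Eg, Complex.ofReal_exp]
    rw [show ((u ^ (-(1 / 2) : ℝ) : ℝ) : ℂ) = 1 / ((u ^ (1 / 2 : ℝ) : ℝ) : ℂ) by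
      rw [Real.rpow_neg hu.le, Complex.ofReal_inv]
      exact (one_div _).symm]
  have h3 : (inner ℂ (F Glp) (F g) : ℂ)
      = ((u ^ (-(1 / 2) : ℝ) : ℝ) : ℂ) * ∫ t : ℝ, (F g) t * Eg u⁻¹ t := by
    rw [L2.inner_def]
    have hae : ∀ᵐ t ∂(volume : Measure ℝ), (inner ℂ ((F Glp : ℝ → ℂ) t) ((F g : ℝ → ℂ) t) : ℂ)
        = ((u ^ (-(1 / 2) : ℝ) : ℝ) : ℂ) * ((F g) t * Eg u⁻¹ t) := by
      filter_upwards [hFG] with t ht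
      rw [RCLike.inner_apply', ht, map_mul, Complex.conj_ofReal, starRingEnd_apply,
        ← starRingEnd_apply, Eg_conj]
      ring
    rw [integral_congr_ae hae, integral_const_mul]
  rw [← h1, ← h2, h3]

/-- Splitting the integral of an (a.e.) even function into twice the half-line integral. -/
lemma integral_even_two {h : ℝ → ℂ} (hev : ∀ᵐ x : ℝ, h (-x) = h x) {u : ℝ}
    (hint : Integrable (fun t => h t * Eg u t) volume) :
    ∫ t : ℝ, h t * Eg u t = 2 * ∫ t in Ioi (0 : ℝ), h t * Eg u t := by
  have hIic : ∫ t in Iic (0 : ℝ), h t * Eg u t = ∫ t in Ioi (0 : ℝ), h t * Eg u t := by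
    have := integral_comp_neg_Ioi (0 : ℝ) (fun t => h t * Eg u t)
    rw [neg_zero] at this
    rw [← this]
    refine setIntegral_congr_ae measurableSet_Ioi ?_
    filter_upwards [hev] with t ht _
    rw [ht, Eg_neg]
  have hsplit := integral_add_compl (measurableSet_Iic : MeasurableSet (Iic (0 : ℝ))) hint
  rw [compl_Iic] at hsplit
  rw [← hsplit, hIic]
  ring

lemma gauss_u_integrable {w : ℂ} (hw : 0 < w.re) {c : ℝ} (hc : 0 < c) :
    IntegrableOn (fun u : ℝ => (u : ℂ) ^ (w - 1) * ((Real.exp (-(c * u)) : ℝ) : ℂ))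
      (Ioi 0) volume := by
  have h := Complex.GammaIntegral_convergent hw
  rw [← mul_zero c, ← integrableOn_Ioi_comp_mul_left_iff _ _ hc] at h
  have hc0 : ((c : ℂ)) ^ (w - 1) ≠ 0 := by
    rw [Ne, Complex.cpow_eq_zero_iff, not_and_or]
    exact Or.inl (Complex.ofReal_ne_zero.mpr hc.ne')
  refine IntegrableOn.congr_fun (h.const_mul (((c : ℂ) ^ (w - 1))⁻¹))
    (fun u hu => ?_) measurableSet_Ioi
  have hu0 : (0 : ℝ) < u := hu
  have : ((c * u : ℝ) : ℂ) ^ (w - 1) = (c : ℂ) ^ (w - 1) * (u : ℂ) ^ (w - 1) := by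
    rw [Complex.ofReal_mul, Complex.mul_cpow_ofReal_nonneg hc.le hu0.le]
  simp only [this]
  field_simp

/-- cpow algebra: `(1/(π t²))^{s/2} = π^{-s/2} t^{-s}` for `t > 0`. -/
lemma one_div_cpow_eq {t : ℝ} (ht : 0 < t) (s : ℂ) :
    (1 / ((Real.pi * t ^ 2 : ℝ) : ℂ)) ^ (s / 2)
      = (Real.pi : ℂ) ^ (-s / 2) * (t : ℂ) ^ (-s) := by
  have hπt : (0 : ℝ) < Real.pi * t ^ 2 := by positivity
  have hx : ∀ {x : ℝ}, 0 < x → ∀ w : ℂ, ((x : ℝ) : ℂ) ^ w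
      = Complex.exp (w * (Real.log x : ℂ)) := by
    intro x hx w
    rw [Complex.cpow_def_of_ne_zero (Complex.ofReal_ne_zero.mpr hx.ne'),
      Complex.ofReal_log hx.le, mul_comm]
  have h1 : (1 / ((Real.pi * t ^ 2 : ℝ) : ℂ)) = (((Real.pi * t ^ 2)⁻¹ : ℝ) : ℂ) := by
    rw [one_div, Complex.ofReal_inv]
  rw [h1, hx (inv_pos.mpr hπt), hx Real.pi_pos, hx ht, ← Complex.exp_add]
  rw [Real.log_inv, Real.log_mul Real.pi_pos.ne' (pow_ne_zero 2 ht.ne'), Real.log_pow]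
  congr 1
  push_cast
  ring

/-- The key Fubini computation: the Mellin transform (at `s/2`) of the half-line Gaussian
pairing equals the completed Mellin transform `π^{-s/2}Γ(s/2)∫ h t^{-s}`. -/
lemma mellin_gauss_swap {h : ℝ → ℂ} (hm : AEStronglyMeasurable h volume) {s : ℂ}
    (hs : 0 < s.re)
    (hint : IntegrableOn (fun t : ℝ => h t * (t : ℂ) ^ (-s)) (Ioi 0) volume) :
    ∫ u in Ioi (0 : ℝ), (u : ℂ) ^ (s / 2 - 1) * ∫ t in Ioi (0 : ℝ), h t * Eg u t
      = (Real.pi : ℂ) ^ (-s / 2) * Complex.Gamma (s / 2)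
        * ∫ t in Ioi (0 : ℝ), h t * (t : ℂ) ^ (-s) := by
  have hre2 : (s / 2).re = s.re / 2 := by
    rw [div_eq_mul_inv, show ((2 : ℂ))⁻¹ = ((2⁻¹ : ℝ) : ℂ) by norm_num, mul_comm,
      Complex.re_ofReal_mul]
    ring
  have hs2 : 0 < (s / 2).re := by rw [hre2]; linarith
  set σ := s.re with hσ
  set P : ℝ × ℝ → ℂ := fun p => (p.1 : ℂ) ^ (s / 2 - 1) * (h p.2 * Eg p.1 p.2) with hP
  have hPm : AEStronglyMeasurable P
      ((volume.restrict (Ioi 0)).prod (volume.restrict (Ioi 0))) := by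
    apply AEStronglyMeasurable.mul
    · have hcont : ContinuousOn (fun u : ℝ => (u : ℂ) ^ (s / 2 - 1)) (Ioi 0) :=
        continuousOn_of_forall_continuousAt fun u hu =>
          Complex.continuousAt_ofReal_cpow_const u _ (Or.inr (ne_of_gt hu))
      exact (hcont.aestronglyMeasurable measurableSet_Ioi).comp_quasiMeasurePreserving
        Measure.quasiMeasurePreserving_fst
    · exact ((hm.restrict.comp_quasiMeasurePreserving
        Measure.quasiMeasurePreserving_snd).mul
        Eg_continuous2.aestronglyMeasurable)
  have hslice : ∀ t ∈ Ioi (0 : ℝ),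
      Integrable (fun u => P (u, t)) (volume.restrict (Ioi 0)) := by
    intro t ht
    have hpt : (0 : ℝ) < Real.pi * t ^ 2 := mul_pos Real.pi_pos (pow_pos ht 2)
    refine IntegrableOn.congr_fun ((gauss_u_integrable hs2 hpt).const_mul (h t))
      (fun u hu => ?_) measurableSet_Ioi
    have harg : Real.exp (-(Real.pi * t ^ 2 * u)) = Real.exp (-Real.pi * u * t ^ 2) := by
      congr 1
      ring
    simp only [hP, Eg, harg]
    ring
  have base : IntegrableOn (fun t : ℝ => ‖h t‖ * t ^ (-σ)) (Ioi 0) volume := by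
    refine IntegrableOn.congr_fun hint.norm (fun t ht => ?_) measurableSet_Ioi
    rw [norm_mul,
      Complex.norm_cpow_eq_rpow_re_of_pos ht, Complex.neg_re]
  have hσ : 0 < σ := hs
  have hσ2 : 0 < σ / 2 := by linarith
  have hre21 : (s / 2 - 1).re = σ / 2 - 1 := by
    rw [Complex.sub_re, hre2, Complex.one_re]
  have key : ∀ t ∈ Ioi (0 : ℝ), (∫ u, ‖P (u, t)‖ ∂(volume.restrict (Ioi 0)))
      = ‖h t‖ * ((1 / (Real.pi * t ^ 2)) ^ (σ / 2) * Real.Gamma (σ / 2)) := by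
    intro t ht
    have hpt : (0 : ℝ) < Real.pi * t ^ 2 := mul_pos Real.pi_pos (pow_pos ht 2)
    have hEq : EqOn (fun u : ℝ => ‖P (u, t)‖)
        (fun u : ℝ => ‖h t‖ * (u ^ (σ / 2 - 1)
          * Real.exp (-(Real.pi * t ^ 2 * u)))) (Ioi 0) := by
      intro u hu
      simp only [hP, norm_mul, Eg_norm]
      rw [
        Complex.norm_cpow_eq_rpow_re_of_pos hu, hre21,
        show -Real.pi * u * t ^ 2 = -(Real.pi * t ^ 2 * u) by ring]
      ring
    rw [show (∫ u, ‖P (u, t)‖ ∂(volume.restrict (Ioi 0)))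
        = ∫ u in Ioi (0 : ℝ), ‖P (u, t)‖ from rfl,
      setIntegral_congr_fun measurableSet_Ioi hEq, integral_const_mul,
      Real.integral_rpow_mul_exp_neg_mul_Ioi hσ2 hpt]
  have hnorm_int : Integrable (fun t => ∫ u, ‖P (u, t)‖ ∂(volume.restrict (Ioi 0)))
      (volume.restrict (Ioi 0)) := by
    have hconst : Integrable
        (fun t : ℝ => (Real.pi ^ (-(σ / 2)) * Real.Gamma (σ / 2)) * (‖h t‖ * t ^ (-σ)))
        (volume.restrict (Ioi 0)) := base.const_mul _
    refine hconst.congr ?_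
    filter_upwards [ae_restrict_mem measurableSet_Ioi] with t ht
    rw [key t ht]
    have hpow : (1 / (Real.pi * t ^ 2)) ^ (σ / 2) = Real.pi ^ (-(σ / 2)) * t ^ (-σ) := by
      rw [one_div, Real.inv_rpow (by positivity), ← Real.rpow_neg (by positivity),
        show -(σ / 2) = -(σ / 2) from rfl]
      rw [Real.mul_rpow Real.pi_pos.le (sq_nonneg t)]
      congr 1
      rw [show (t : ℝ) ^ 2 = t ^ ((2 : ℕ) : ℝ) from (Real.rpow_natCast t 2).symm,
        ← Real.rpow_mul ht.le]
      congr 1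
      ring
    rw [hpow]
    ring
  have hPint : Integrable P ((volume.restrict (Ioi 0)).prod (volume.restrict (Ioi 0))) := by
    rw [integrable_prod_iff' hPm]
    exact ⟨(ae_restrict_mem measurableSet_Ioi).mono fun t ht => hslice t ht, hnorm_int⟩
  have hswap := integral_integral_swap (f := fun u t => P (u, t))
    (by exact hPint)
  calc ∫ u in Ioi (0 : ℝ), (u : ℂ) ^ (s / 2 - 1) * ∫ t in Ioi (0 : ℝ), h t * Eg u t
      = ∫ u in Ioi (0 : ℝ), ∫ t in Ioi (0 : ℝ), P (u, t) := by
        refine setIntegral_congr_fun measurableSet_Ioi fun u hu => ?_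
        rw [← integral_const_mul]
    _ = ∫ t in Ioi (0 : ℝ), ∫ u in Ioi (0 : ℝ), P (u, t) := hswap
    _ = ∫ t in Ioi (0 : ℝ),
          ((Real.pi : ℂ) ^ (-s / 2) * Complex.Gamma (s / 2)) * (h t * (t : ℂ) ^ (-s)) := by
        refine setIntegral_congr_fun measurableSet_Ioi fun t ht => ?_
        have hpt : (0 : ℝ) < Real.pi * t ^ 2 := mul_pos Real.pi_pos (pow_pos ht 2)
        have h1 : ∫ u in Ioi (0 : ℝ), P (u, t)
            = h t * ∫ u in Ioi (0 : ℝ), (u : ℂ) ^ (s / 2 - 1)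
                * Complex.exp (-(((Real.pi * t ^ 2 : ℝ) : ℂ) * (u : ℂ))) := by
          rw [← integral_const_mul]
          refine setIntegral_congr_fun measurableSet_Ioi fun u hu => ?_
          simp only [hP, Eg_cexp]
          rw [show -(((Real.pi * t ^ 2 : ℝ) : ℂ) * (u : ℂ))
            = -(Real.pi : ℂ) * u * (t : ℂ) ^ 2 by push_cast; ring]
          ring
        rw [h1, integral_cpow_mul_exp_neg_mul_Ioi hs2 hpt, one_div_cpow_eq ht s]
        ring
    _ = (Real.pi : ℂ) ^ (-s / 2) * Complex.Gamma (s / 2)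
          * ∫ t in Ioi (0 : ℝ), h t * (t : ℂ) ^ (-s) := integral_const_mul _ _

/-- The Fourier–Plancherel transform preserves (a.e.) evenness. -/
lemma fourier_even (F : Lp ℂ 2 (volume : Measure ℝ) ≃ₗᵢ[ℂ] Lp ℂ 2 (volume : Measure ℝ))
    (hF : IsFourierPlancherel F) (f : Lp ℂ 2 (volume : Measure ℝ))
    (heven : ∀ᵐ x : ℝ, f (-x) = f x) : ∀ᵐ x : ℝ, (F f) (-x) = (F f) x := by
  have hmp : MeasurePreserving (fun x : ℝ => -x) volume volume := by
    simpa using Measure.measurePreserving_neg (volume : Measure ℝ)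
  set R : Lp ℂ 2 (volume : Measure ℝ) →+ Lp ℂ 2 (volume : Measure ℝ) :=
    Lp.compMeasurePreserving (fun x : ℝ => -x) hmp with hRdef
  have hRcoe : ∀ g : Lp ℂ 2 (volume : Measure ℝ),
      (R g : ℝ → ℂ) =ᵐ[volume] fun x => g (-x) :=
    fun g => Lp.coeFn_compMeasurePreserving g hmp
  have hRnorm : ∀ g : Lp ℂ 2 (volume : Measure ℝ), ‖R g‖ = ‖g‖ :=
    fun g => Lp.norm_compMeasurePreserving g hmp
  have hcomm : ∀ g : Lp ℂ 2 (volume : Measure ℝ), F (R g) = R (F g) := by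
    intro g
    by_contra hne
    set D := F (R g) - R (F g) with hD
    have hDne : D ≠ 0 := by
      rw [hD, sub_ne_zero]
      exact hne
    have hDpos : 0 < ‖D‖ :=
      (norm_nonneg D).lt_of_ne' fun hc => hDne (norm_eq_zero.mp hc)
    obtain ⟨φ, hφc, hφnorm, hφcont, hφ2⟩ :=
      (Lp.memLp g).exists_hasCompactSupport_eLpNorm_sub_le (p := 2)
        (by norm_num) (ε := ENNReal.ofReal (‖D‖ / 4))
        (by rw [Ne, ENNReal.ofReal_eq_zero, not_le]; linarith)
    set Φ : Lp ℂ 2 (volume : Measure ℝ) := hφ2.toLp φ with hΦdef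
    have hgd : ‖g - Φ‖ ≤ ‖D‖ / 4 := by
      have hcoe : (↑↑(g - Φ) : ℝ → ℂ) =ᵐ[volume] ⇑g - φ := by
        filter_upwards [Lp.coeFn_sub g Φ, hφ2.coeFn_toLp] with x h1 h2
        rw [h1]
        simp [hΦdef, h2]
      rw [Lp.norm_def, eLpNorm_congr_ae hcoe]
      calc (eLpNorm (⇑g - φ) 2 volume).toReal
          ≤ (ENNReal.ofReal (‖D‖ / 4)).toReal :=
            ENNReal.toReal_mono ENNReal.ofReal_ne_top hφnorm
        _ = ‖D‖ / 4 := ENNReal.toReal_ofReal (by positivity)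
    have hφi : Integrable φ volume := hφcont.integrable_of_hasCompactSupport hφc
    have hφneg_cont : Continuous (fun x : ℝ => φ (-x)) := hφcont.comp continuous_neg
    have hφneg_supp : HasCompactSupport (fun x : ℝ => φ (-x)) := by
      exact hφc.comp_homeomorph (Homeomorph.neg ℝ)
    have hφni : Integrable (fun x : ℝ => φ (-x)) volume :=
      hφneg_cont.integrable_of_hasCompactSupport hφneg_supp
    have hφn2 : MemLp (fun x : ℝ => φ (-x)) 2 volume :=
      hφneg_cont.memLp_of_hasCompactSupport hφneg_supp
    have hRΦ : R Φ = hφn2.toLp (fun x : ℝ => φ (-x)) := by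
      refine Lp.ext ((hRcoe Φ).trans ?_ |>.trans hφn2.coeFn_toLp.symm)
      have := hmp.quasiMeasurePreserving.ae_eq hφ2.coeFn_toLp
      exact this
    have hFRΦ : (F (R Φ) : ℝ → ℂ) =ᵐ[volume]
        𝓕⁻ (fun x : ℝ => φ (-x)) := by
      rw [hRΦ]
      exact hF _ hφni hφn2
    have hinv : ∀ w : ℝ, 𝓕⁻ (fun x : ℝ => φ (-x)) w
        = 𝓕⁻ φ (-w) := by
      intro w
      rw [Real.fourierInv_eq, Real.fourierInv_eq,
        ← MeasureTheory.integral_neg_eq_self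
          (fun v : ℝ => Real.fourierChar (inner ℝ v (-w)) • φ v)]
      refine integral_congr_ae (Eventually.of_forall fun v => ?_)
      simp [inner_neg_neg]
    have hRFΦ : (R (F Φ) : ℝ → ℂ) =ᵐ[volume]
        fun w : ℝ => 𝓕⁻ φ (-w) := by
      refine (hRcoe (F Φ)).trans ?_
      have := hmp.quasiMeasurePreserving.ae_eq (hF φ hφi hφ2)
      exact this
    have hinv' : (𝓕⁻ fun x : ℝ => φ (-x)) =ᵐ[volume]
        fun w : ℝ => 𝓕⁻ φ (-w) := Eventually.of_forall hinv
    have hcommΦ : F (R Φ) = R (F Φ) :=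
      Lp.ext (hFRΦ.trans (hinv'.trans hRFΦ.symm))
    have e1 : D = F (R (g - Φ)) + R (F (Φ - g)) := by
      rw [map_sub R g Φ, map_sub F (R g) (R Φ), map_sub F Φ g, map_sub R (F Φ) (F g),
        hcommΦ, hD]
      abel
    have hest : ‖D‖ ≤ 2 * (‖D‖ / 4) := by
      calc ‖D‖ ≤ ‖F (R (g - Φ))‖ + ‖R (F (Φ - g))‖ := e1 ▸ norm_add_le _ _
        _ = ‖g - Φ‖ + ‖Φ - g‖ := by
            rw [F.norm_map, hRnorm, hRnorm, F.norm_map]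
        _ = 2 * ‖g - Φ‖ := by rw [norm_sub_rev Φ g]; ring
        _ ≤ 2 * (‖D‖ / 4) := by linarith
    linarith
  have hRf : R f = f := Lp.ext ((hRcoe f).trans heven)
  have hFf : F f = R (F f) := by
    conv_lhs => rw [← hRf]
    exact hcomm f
  have h2 : (fun x : ℝ => (F f) (-x)) =ᵐ[volume] ⇑(F f) := by
    conv_rhs => rw [hFf]
    exact (hRcoe (F f)).symm
  exact h2

end SonineProof

open SonineProof Filter Asymptotics

/-- Functional equation for square-integrable even Sonine functions: the right Mellin
transforms converge for `Re(s) > 1/2` and glue, via the completed Mellin transforms,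
into a single entire function. -/
theorem sonine_mellin_functional_equation (lam : ℝ) (hlam : 0 < lam)
    (F : Lp ℂ 2 (volume : Measure ℝ) ≃ₗᵢ[ℂ] Lp ℂ 2 (volume : Measure ℝ))
    (hF : IsFourierPlancherel F)
    (f : Lp ℂ 2 (volume : Measure ℝ))
    (heven : ∀ᵐ x : ℝ, f (-x) = f x)
    (hf0 : ∀ᵐ x : ℝ, x ∈ Ioo (-lam) lam → f x = 0)
    (hFf0 : ∀ᵐ x : ℝ, x ∈ Ioo (-lam) lam → (F f) x = 0) :
    (∀ s : ℂ, 1/2 < s.re →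
        IntegrableOn (fun t : ℝ => f t * (t : ℂ) ^ (-s)) (Ioi 0) volume ∧
        IntegrableOn (fun t : ℝ => (F f) t * (t : ℂ) ^ (-s)) (Ioi 0) volume) ∧
    ∃ Φ : ℂ → ℂ, Differentiable ℂ Φ ∧
      (∀ s : ℂ, 1/2 < s.re →
        Φ s = (Real.pi : ℂ) ^ (-s/2) * Complex.Gamma (s/2) *
          ∫ t in Ioi (0 : ℝ), f t * (t : ℂ) ^ (-s)) ∧
      (∀ s : ℂ, s.re < 1/2 →
        Φ s = (Real.pi : ℂ) ^ (-(1-s)/2) * Complex.Gamma ((1-s)/2) *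
          ∫ t in Ioi (0 : ℝ), (F f) t * (t : ℂ) ^ (-(1-s))) := by
  classical
  have hfmem : MemLp (⇑f) 2 (volume : Measure ℝ) := Lp.memLp f
  have hFfmem : MemLp (⇑(F f)) 2 (volume : Measure ℝ) := Lp.memLp (F f)
  have hFeven : ∀ᵐ x : ℝ, (F f) (-x) = (F f) x := fourier_even F hF f heven
  have hint1 : ∀ s : ℂ, 1/2 < s.re →
      IntegrableOn (fun t : ℝ => f t * (t : ℂ) ^ (-s)) (Ioi 0) volume :=
    fun s hs => sonine_integrableOn hlam hfmem hf0 hs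
  have hint2 : ∀ s : ℂ, 1/2 < s.re →
      IntegrableOn (fun t : ℝ => (F f) t * (t : ℂ) ^ (-s)) (Ioi 0) volume :=
    fun s hs => sonine_integrableOn hlam hFfmem hFf0 hs
  refine ⟨fun s hs => ⟨hint1 s hs, hint2 s hs⟩, ?_⟩
  set c : ℝ := Real.pi * lam ^ 2 with hc
  have hcpos : 0 < c := by rw [hc]; positivity
  set θ : ℝ → ℂ := fun u => ∫ t : ℝ, f t * Eg u t with hθdef
  set θF : ℝ → ℂ := fun u => ∫ t : ℝ, (F f) t * Eg u t with hθFdef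
  set C1 : ℝ := ∫ t : ℝ, ‖f t * Eg 1 t‖ with hC1
  set C2 : ℝ := ∫ t : ℝ, ‖(F f) t * Eg 1 t‖ with hC2
  have hC2nonneg : 0 ≤ C2 := integral_nonneg fun t => norm_nonneg _
  have hdecay : ∀ u : ℝ, 1 ≤ u → ‖θ u‖ ≤ C1 * Real.exp (-c * (u - 1)) := by
    intro u hu
    have := theta_decay hlam hfmem hf0 hu
    simpa [hθdef, hC1, hc, neg_mul] using this
  have hdecayF : ∀ u : ℝ, 1 ≤ u → ‖θF u‖ ≤ C2 * Real.exp (-c * (u - 1)) := by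
    intro u hu
    have := theta_decay hlam hFfmem hFf0 hu
    simpa [hθFdef, hC2, hc, neg_mul] using this
  have hplan : ∀ u : ℝ, 0 < u → θ u = ((u ^ (-(1/2) : ℝ) : ℝ) : ℂ) * θF u⁻¹ :=
    fun u hu => theta_plancherel F hF f hu
  have hsmall : ∀ u : ℝ, 0 < u → u ≤ 1 →
      ‖θ u‖ ≤ C2 * Real.exp c * (u ^ (-(1/2) : ℝ) * Real.exp (-c * u⁻¹)) := by
    intro u hu hu1
    have hui : 1 ≤ u⁻¹ := one_le_inv_iff₀.mpr ⟨hu, hu1⟩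
    rw [hplan u hu, norm_mul, Complex.norm_real, Real.norm_eq_abs,
      abs_of_pos (Real.rpow_pos_of_pos hu _)]
    calc u ^ (-(1/2) : ℝ) * ‖θF u⁻¹‖
        ≤ u ^ (-(1/2) : ℝ) * (C2 * Real.exp (-c * (u⁻¹ - 1))) :=
          mul_le_mul_of_nonneg_left (hdecayF u⁻¹ hui) (Real.rpow_nonneg hu.le _)
      _ = C2 * Real.exp c * (u ^ (-(1/2) : ℝ) * Real.exp (-c * u⁻¹)) := by
          rw [show -c * (u⁻¹ - 1) = -c * u⁻¹ + c by ring, Real.exp_add]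
          ring
  have hθm : AEStronglyMeasurable θ (volume.restrict (Ioi 0)) := by
    have hprod : AEStronglyMeasurable (fun p : ℝ × ℝ => (f : ℝ → ℂ) p.2 * Eg p.1 p.2)
        ((volume.restrict (Ioi 0)).prod volume) :=
      ((Lp.aestronglyMeasurable f).comp_quasiMeasurePreserving
        Measure.quasiMeasurePreserving_snd).mul Eg_continuous2.aestronglyMeasurable
    exact hprod.integral_prod_right'
  have hθint : IntegrableOn θ (Ioi 0) volume := by
    have hsplit : Ioc (0 : ℝ) 1 ∪ Ioi 1 = Ioi 0 := Ioc_union_Ioi_eq_Ioi zero_le_one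
    rw [← hsplit]
    refine IntegrableOn.union ?_ ?_
    · have hdom : IntegrableOn (fun u : ℝ => (C2 * Real.exp c) * u ^ (-(1/2) : ℝ))
          (Ioc 0 1) volume := by
        have h1 : IntervalIntegrable (fun u : ℝ => u ^ (-(1/2) : ℝ)) volume 0 1 :=
          intervalIntegral.intervalIntegrable_rpow' (by norm_num)
        rw [intervalIntegrable_iff_integrableOn_Ioc_of_le zero_le_one] at h1
        exact h1.const_mul _
      refine Integrable.mono' hdom
        (hθm.mono_measure (Measure.restrict_mono Ioc_subset_Ioi_self le_rfl)) ?_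
      filter_upwards [ae_restrict_mem measurableSet_Ioc] with u hu
      calc ‖θ u‖ ≤ C2 * Real.exp c * (u ^ (-(1/2) : ℝ) * Real.exp (-c * u⁻¹)) :=
            hsmall u hu.1 hu.2
        _ ≤ C2 * Real.exp c * (u ^ (-(1/2) : ℝ) * 1) := by
            refine mul_le_mul_of_nonneg_left ?_
              (mul_nonneg hC2nonneg (Real.exp_pos _).le)
            refine mul_le_mul_of_nonneg_left ?_ (Real.rpow_nonneg hu.1.le _)
            rw [Real.exp_le_one_iff]
            have : 0 ≤ c * u⁻¹ := mul_nonneg hcpos.le (inv_nonneg.mpr hu.1.le)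
            linarith
        _ = C2 * Real.exp c * u ^ (-(1/2) : ℝ) := by ring
    · have hdom : IntegrableOn (fun u : ℝ => (C1 * Real.exp c) * Real.exp (-c * u))
          (Ioi 1) volume := (exp_neg_integrableOn_Ioi 1 hcpos).const_mul _
      refine Integrable.mono' hdom
        (hθm.mono_measure (Measure.restrict_mono (Ioi_subset_Ioi zero_le_one) le_rfl)) ?_
      filter_upwards [ae_restrict_mem measurableSet_Ioi] with u hu
      calc ‖θ u‖ ≤ C1 * Real.exp (-c * (u - 1)) := hdecay u hu.le
        _ = C1 * Real.exp c * Real.exp (-c * u) := by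
            rw [show -c * (u - 1) = -c * u + c by ring, Real.exp_add]
            ring
  have hθloc : LocallyIntegrableOn θ (Ioi 0) volume := hθint.locallyIntegrableOn
  have htop : θ =O[atTop] fun u : ℝ => Real.exp (-c * u) := by
    rw [isBigO_iff]
    refine ⟨C1 * Real.exp c, ?_⟩
    filter_upwards [eventually_ge_atTop 1] with u hu
    rw [Real.norm_eq_abs, abs_of_pos (Real.exp_pos _)]
    calc ‖θ u‖ ≤ C1 * Real.exp (-c * (u - 1)) := hdecay u hu
      _ = C1 * Real.exp c * Real.exp (-c * u) := by
          rw [show -c * (u - 1) = -c * u + c by ring, Real.exp_add]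
          ring
  have hbot : ∀ b : ℝ, θ =O[nhdsWithin 0 (Ioi 0)] fun u : ℝ => u ^ (-b) := by
    intro b
    have h1 : Tendsto (fun v : ℝ => v ^ (1/2 - b) * Real.exp (-c * v)) atTop (nhds 0) :=
      tendsto_rpow_mul_exp_neg_mul_atTop_nhds_zero _ _ hcpos
    have h2 : Tendsto (fun u : ℝ => u ^ (b - 1/2) * Real.exp (-c * u⁻¹))
        (nhdsWithin 0 (Ioi 0)) (nhds 0) := by
      have h3 := h1.comp tendsto_inv_nhdsGT_zero
      refine h3.congr' ?_
      filter_upwards [self_mem_nhdsWithin] with u hu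
      have hu' : (0 : ℝ) < u := hu
      simp only [Function.comp_apply]
      rw [Real.inv_rpow hu'.le, ← Real.rpow_neg hu'.le]
      congr 2
      ring
    rw [isBigO_iff]
    refine ⟨C2 * Real.exp c, ?_⟩
    have hev1 : ∀ᶠ u in nhdsWithin 0 (Ioi 0),
        u ^ (b - 1/2) * Real.exp (-c * u⁻¹) < 1 :=
      h2.eventually_lt_const zero_lt_one
    have hev2 : ∀ᶠ u in nhdsWithin 0 (Ioi 0), u ∈ Ioc (0 : ℝ) 1 :=
      eventually_mem_set.mpr (Ioc_mem_nhdsGT_of_mem (by simp))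
    filter_upwards [hev1, hev2] with u h1' h2'
    have hu : (0 : ℝ) < u := h2'.1
    rw [Real.norm_eq_abs, abs_of_pos (Real.rpow_pos_of_pos hu _)]
    calc ‖θ u‖ ≤ C2 * Real.exp c * (u ^ (-(1/2) : ℝ) * Real.exp (-c * u⁻¹)) :=
          hsmall u hu h2'.2
      _ = C2 * Real.exp c * (u ^ (-b) * (u ^ (b - 1/2) * Real.exp (-c * u⁻¹))) := by
          rw [show (-(1/2) : ℝ) = -b + (b - 1/2) by ring, Real.rpow_add hu]
          ring
      _ ≤ C2 * Real.exp c * (u ^ (-b) * 1) := by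
          refine mul_le_mul_of_nonneg_left ?_
            (mul_nonneg hC2nonneg (Real.exp_pos _).le)
          exact mul_le_mul_of_nonneg_left h1'.le (Real.rpow_nonneg hu.le _)
      _ = C2 * Real.exp c * u ^ (-b) := by ring
  have hdiff : Differentiable ℂ (mellin θ) := fun w =>
    mellin_differentiableAt_of_isBigO_rpow_exp hcpos hθloc htop (hbot (w.re - 1))
      (by linarith)
  have hform1 : ∀ s : ℂ, 1/2 < s.re → mellin θ (s/2)
      = 2 * ((Real.pi : ℂ) ^ (-s/2) * Complex.Gamma (s/2)
        * ∫ t in Ioi (0 : ℝ), f t * (t : ℂ) ^ (-s)) := by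
    intro s hs
    have h2 : mellin θ (s/2)
        = ∫ u in Ioi (0 : ℝ), (u : ℂ) ^ (s/2 - 1)
            * (2 * ∫ t in Ioi (0 : ℝ), f t * Eg u t) := by
      rw [mellin]
      refine setIntegral_congr_fun measurableSet_Ioi fun u hu => ?_
      rw [smul_eq_mul]
      congr 1
      exact integral_even_two heven (mul_Eg_integrable hfmem hu)
    rw [h2]
    simp_rw [show ∀ (a b : ℂ), a * (2 * b) = 2 * (a * b) from fun a b => by ring]
    rw [integral_const_mul,
      mellin_gauss_swap hfmem.aestronglyMeasurable (by linarith : (0:ℝ) < s.re)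
        (hint1 s hs)]
  have hform2 : ∀ s : ℂ, s.re < 1/2 → mellin θ (s/2)
      = 2 * ((Real.pi : ℂ) ^ (-(1-s)/2) * Complex.Gamma ((1-s)/2)
        * ∫ t in Ioi (0 : ℝ), (F f) t * (t : ℂ) ^ (-(1-s))) := by
    intro s hs
    have hs' : 1/2 < (1 - s).re := by
      rw [Complex.sub_re, Complex.one_re]
      linarith
    have e1 : mellin θ (s/2) = mellin (fun u : ℝ => θF (u ^ (-1 : ℝ))) ((s-1)/2) := by
      rw [mellin, mellin]
      refine setIntegral_congr_fun measurableSet_Ioi fun u hu => ?_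
      rw [smul_eq_mul, smul_eq_mul, Real.rpow_neg_one, hplan u hu]
      have hcomb : (u : ℂ) ^ (s/2 - 1) * ((u ^ (-(1/2) : ℝ) : ℝ) : ℂ)
          = (u : ℂ) ^ ((s-1)/2 - 1) := by
        rw [Complex.ofReal_cpow hu.le,
          ← Complex.cpow_add _ _ (Complex.ofReal_ne_zero.mpr (ne_of_gt hu))]
        congr 1
        push_cast
        ring
      calc (u : ℂ) ^ (s/2 - 1) * (((u ^ (-(1/2) : ℝ) : ℝ) : ℂ) * θF u⁻¹)
          = ((u : ℂ) ^ (s/2 - 1) * ((u ^ (-(1/2) : ℝ) : ℝ) : ℂ)) * θF u⁻¹ := by ring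
        _ = (u : ℂ) ^ ((s-1)/2 - 1) * θF u⁻¹ := by rw [hcomb]
    rw [e1, mellin_comp_rpow θF ((s-1)/2) (-1)]
    simp only [abs_neg, abs_one, inv_one, one_smul]
    rw [show ((s-1)/2) / ((-1 : ℝ) : ℂ) = (1-s)/2 by push_cast; ring]
    have h2 : mellin θF ((1-s)/2)
        = ∫ u in Ioi (0 : ℝ), (u : ℂ) ^ ((1-s)/2 - 1)
            * (2 * ∫ t in Ioi (0 : ℝ), (F f) t * Eg u t) := by
      rw [mellin]
      refine setIntegral_congr_fun measurableSet_Ioi fun u hu => ?_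
      rw [smul_eq_mul]
      congr 1
      exact integral_even_two hFeven (mul_Eg_integrable hFfmem hu)
    rw [h2]
    simp_rw [show ∀ (a b : ℂ), a * (2 * b) = 2 * (a * b) from fun a b => by ring]
    rw [integral_const_mul,
      mellin_gauss_swap hFfmem.aestronglyMeasurable
        (by linarith : (0:ℝ) < (1 - s).re) (hint2 (1-s) hs')]
  refine ⟨fun z => (1/2 : ℂ) * mellin θ (z/2), ?_, fun s hs => ?_, fun s hs => ?_⟩
  · exact (hdiff.comp (differentiable_id.div_const 2)).const_mul _
  · show (1/2 : ℂ) * mellin θ (s/2) = _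
    rw [hform1 s hs]
    ring
  · show (1/2 : ℂ) * mellin θ (s/2) = _
    rw [hform2 s hs]
    ring
end
end

section
/- Let λ > 0 and let f ∈ L²(ℝ) be even. Then P_λ f + ℱ P_λ ℱ⁻¹ f = 0 in L²(ℝ) if and only if f is a Sonine function, i.e. f = 0 a.e. on (−λ,λ) and ℱf = 0 a.e. on (−λ,λ). In particular K_λ is the kernel of P_λ + ℱ P_λ ℱ⁻¹ on the even subspace of L²(ℝ). -/
open MeasureTheory Complex Set FourierTransform

noncomputable section

local notation "⟪" x ", " y "⟫" => @inner ℂ _ _ x y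

/-- Multiplication formula for the inverse Fourier transform. -/
lemma mult_formula {g h : ℝ → ℂ} (hg : Integrable g volume) (hh : Integrable h volume) :
    ∫ x, FourierTransformInv.fourierInv g x * h x = ∫ x, g x * FourierTransformInv.fourierInv h x := by
  have hL : (-(innerₗ ℝ) : ℝ →ₗ[ℝ] ℝ →ₗ[ℝ] ℝ).flip = -(innerₗ ℝ) := by
    ext x
    simp [real_inner_comm]
  have := VectorFourier.integral_fourierIntegral_smul_eq_flip
    (e := Real.fourierChar) (L := -(innerₗ ℝ)) (μ := volume) (ν := volume)
    Real.continuous_fourierChar (by continuity) hg hh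
  rw [hL] at this
  simpa [FourierTransformInv.fourierInv, smul_eq_mul] using this

lemma conj_fourier (g : ℝ → ℂ) (x : ℝ) :
    starRingEnd ℂ (FourierTransform.fourier g x) =
      FourierTransformInv.fourierInv (fun y ↦ starRingEnd ℂ (g y)) x := by
  rw [Real.fourier_eq', Real.fourierInv_eq', ← integral_conj]
  congr 1
  ext y
  rw [smul_eq_mul, smul_eq_mul, map_mul, ← Complex.exp_conj]
  congr 2
  simp [Complex.ext_iff]

lemma fourierInv_comp_neg (g : ℝ → ℂ) :
    FourierTransformInv.fourierInv (fun x ↦ g (-x)) = FourierTransform.fourier g := by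
  rw [Real.fourierInv_eq_fourier_comp_neg]
  simp

lemma integrable_conj' {g : ℝ → ℂ} (hgi : Integrable g volume) :
    Integrable (fun x ↦ starRingEnd ℂ (g x)) volume := by
  refine ⟨Complex.continuous_conj.comp_aestronglyMeasurable hgi.1, ?_⟩
  simpa [HasFiniteIntegral] using hgi.2

lemma memLp_comp_neg {g : ℝ → ℂ} (hgm : MemLp g 2 (volume : Measure ℝ)) :
    MemLp (fun x ↦ g (-x)) 2 (volume : Measure ℝ) :=
  hgm.comp_measurePreserving (Measure.measurePreserving_neg _)

/-- Approximation by continuous compactly supported functions. -/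
lemma approxLp (u : Lp ℂ 2 (volume : Measure ℝ)) {ε : ℝ} (hε : 0 < ε) :
    ∃ (g : ℝ → ℂ) (hgm : MemLp g 2 volume), Continuous g ∧ HasCompactSupport g ∧
      Integrable g volume ∧ eLpNorm ((↑u : ℝ → ℂ) - g) 2 volume ≤ ENNReal.ofReal ε ∧
      ‖u - hgm.toLp g‖ ≤ ε := by
  obtain ⟨g, hgs, hle, hgc, hgm⟩ :=
    (Lp.memLp u).exists_hasCompactSupport_eLpNorm_sub_le (by norm_num)
      (ε := ENNReal.ofReal ε) (by simp [hε, hε.le])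
  refine ⟨g, hgm, hgc, hgs, hgc.integrable_of_hasCompactSupport hgs, hle, ?_⟩
  have h1 : (↑(u - hgm.toLp g) : ℝ → ℂ) =ᵐ[volume] (↑u : ℝ → ℂ) - g := by
    filter_upwards [Lp.coeFn_sub u (hgm.toLp g), hgm.coeFn_toLp] with x h1 h2
    rw [h1, Pi.sub_apply, h2, Pi.sub_apply]
  rw [Lp.norm_def, eLpNorm_congr_ae h1]
  calc (eLpNorm ((↑u : ℝ → ℂ) - g) 2 volume).toReal ≤ (ENNReal.ofReal ε).toReal :=
        ENNReal.toReal_mono (by simp) hle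
    _ = ε := ENNReal.toReal_ofReal hε.le

/-- Core duality identity for the Fourier–Plancherel transform. -/
lemma core_inner (F : Lp ℂ 2 (volume : Measure ℝ) ≃ₗᵢ[ℂ] Lp ℂ 2 (volume : Measure ℝ))
    (hF : IsFourierPlancherel F) {g h : ℝ → ℂ}
    (hgi : Integrable g volume) (hgm : MemLp g 2 volume)
    (hhi : Integrable h volume) (hhm : MemLp h 2 volume) :
    ⟪F ((memLp_comp_neg hgm).toLp (fun x ↦ g (-x))), hhm.toLp h⟫
      = ⟪hgm.toLp g, F (hhm.toLp h)⟫ := by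
  have hw : (F ((memLp_comp_neg hgm).toLp (fun x ↦ g (-x))) : ℝ → ℂ)
      =ᵐ[volume] FourierTransform.fourier g := by
    have := hF (fun x ↦ g (-x)) hgi.comp_neg (memLp_comp_neg hgm)
    rwa [fourierInv_comp_neg g] at this
  have hv : (F (hhm.toLp h) : ℝ → ℂ) =ᵐ[volume] FourierTransformInv.fourierInv h := hF h hhi hhm
  rw [L2.inner_def, L2.inner_def]
  calc ∫ a, ⟪(F ((memLp_comp_neg hgm).toLp (fun x ↦ g (-x)))) a, (hhm.toLp h) a⟫ ∂volume
      = ∫ a, starRingEnd ℂ (FourierTransform.fourier g a) * h a ∂volume := by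
        refine integral_congr_ae ?_
        filter_upwards [hw, hhm.coeFn_toLp] with a h1 h2
        rw [h1, h2, RCLike.inner_apply, mul_comm]
    _ = ∫ a, FourierTransformInv.fourierInv (fun y ↦ starRingEnd ℂ (g y)) a * h a ∂volume := by
        refine integral_congr_ae (Filter.Eventually.of_forall fun a ↦ ?_)
        simp only [conj_fourier g a]
    _ = ∫ a, starRingEnd ℂ (g a) * FourierTransformInv.fourierInv h a ∂volume :=
        mult_formula (integrable_conj' hgi) hhi
    _ = ∫ a, ⟪(hgm.toLp g) a, (F (hhm.toLp h)) a⟫ ∂volume := by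
        refine integral_congr_ae ?_
        filter_upwards [hgm.coeFn_toLp, hv] with a h1 h2
        rw [h1, h2, RCLike.inner_apply, mul_comm]

/-- `F.symm` on nice functions. -/
lemma symm_toLp (F : Lp ℂ 2 (volume : Measure ℝ) ≃ₗᵢ[ℂ] Lp ℂ 2 (volume : Measure ℝ))
    (hF : IsFourierPlancherel F) {g : ℝ → ℂ}
    (hgi : Integrable g volume) (hgm : MemLp g 2 volume) :
    F.symm (hgm.toLp g) = F ((memLp_comp_neg hgm).toLp (fun x ↦ g (-x))) := by
  refine ext_inner_right ℂ fun v ↦ ?_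
  have hlhs : ⟪F.symm (hgm.toLp g), v⟫ = ⟪hgm.toLp g, F v⟫ := by
    conv_rhs => rw [← F.apply_symm_apply (hgm.toLp g)]
    rw [F.inner_map_map]
  rw [hlhs]
  set w := F ((memLp_comp_neg hgm).toLp (fun x ↦ g (-x))) with hwdef
  refine eq_of_forall_dist_le fun ε hε ↦ ?_
  set C : ℝ := ‖hgm.toLp g‖ + ‖w‖ + 1 with hCdef
  have hC0 : 0 < C := by positivity
  obtain ⟨h, hhm, hhc, hhs, hhi, -, hhle⟩ := approxLp v (div_pos hε hC0)
  have hcore : ⟪w, hhm.toLp h⟫ = ⟪hgm.toLp g, F (hhm.toLp h)⟫ :=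
    core_inner F hF hgi hgm hhi hhm
  rw [dist_eq_norm]
  have expand : ⟪hgm.toLp g, F v⟫ - ⟪w, v⟫
      = ⟪hgm.toLp g, F v - F (hhm.toLp h)⟫ - ⟪w, v - hhm.toLp h⟫ := by
    rw [inner_sub_right, inner_sub_right, hcore]; ring
  rw [expand]
  have hFd : ‖F v - F (hhm.toLp h)‖ = ‖v - hhm.toLp h‖ := by
    rw [← map_sub]; exact F.norm_map _
  have hd : ‖v - hhm.toLp h‖ ≤ ε / C := hhle
  calc ‖⟪hgm.toLp g, F v - F (hhm.toLp h)⟫ - ⟪w, v - hhm.toLp h⟫‖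
      ≤ ‖⟪hgm.toLp g, F v - F (hhm.toLp h)⟫‖ + ‖⟪w, v - hhm.toLp h⟫‖ := norm_sub_le _ _
    _ ≤ ‖hgm.toLp g‖ * ‖F v - F (hhm.toLp h)‖ + ‖w‖ * ‖v - hhm.toLp h‖ :=
        add_le_add (norm_inner_le_norm _ _) (norm_inner_le_norm _ _)
    _ = (‖hgm.toLp g‖ + ‖w‖) * ‖v - hhm.toLp h‖ := by rw [hFd]; ring
    _ ≤ C * (ε / C) := by
        apply mul_le_mul _ hd (norm_nonneg _) hC0.le
        rw [hCdef]; linarith [norm_nonneg (hgm.toLp g), norm_nonneg w]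
    _ = ε := by field_simp

/-- For an a.e. even function, `F.symm f = F f`. -/
lemma symm_even (F : Lp ℂ 2 (volume : Measure ℝ) ≃ₗᵢ[ℂ] Lp ℂ 2 (volume : Measure ℝ))
    (hF : IsFourierPlancherel F) (f : Lp ℂ 2 (volume : Measure ℝ))
    (heven : ∀ᵐ x : ℝ, f (-x) = f x) : F.symm f = F f := by
  refine eq_of_forall_dist_le fun ε hε ↦ ?_
  obtain ⟨g, hgm, hgc, hgs, hgi, hgel, hgle⟩ := approxLp f (half_pos hε)
  have hstep : dist ((memLp_comp_neg hgm).toLp (fun x ↦ g (-x))) f ≤ ε / 2 := by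
    rw [dist_eq_norm, Lp.norm_def]
    have h1 : (↑((memLp_comp_neg hgm).toLp (fun x ↦ g (-x)) - f) : ℝ → ℂ)
        =ᵐ[volume] fun x ↦ g (-x) - f (-x) := by
      filter_upwards [Lp.coeFn_sub ((memLp_comp_neg hgm).toLp (fun x ↦ g (-x))) f,
        (memLp_comp_neg hgm).coeFn_toLp, heven] with x h1 h2 h3
      rw [h1, Pi.sub_apply, h2, h3]
    rw [eLpNorm_congr_ae h1]
    have h2 : eLpNorm (fun x ↦ g (-x) - f (-x)) 2 volume
        = eLpNorm (fun x ↦ g x - f x) 2 volume := by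
      have heq : (fun x : ℝ ↦ g (-x) - f (-x)) = (g - (f : ℝ → ℂ)) ∘ Neg.neg := rfl
      have heq2 : (fun x : ℝ ↦ g x - f x) = (g - (f : ℝ → ℂ)) := rfl
      rw [heq, heq2]
      exact eLpNorm_comp_measurePreserving
        (hgm.1.sub (Lp.aestronglyMeasurable f)) (Measure.measurePreserving_neg _)
    rw [h2]
    have h3 : eLpNorm (fun x ↦ g x - f x) 2 volume = eLpNorm ((↑f : ℝ → ℂ) - g) 2 volume := by
      rw [← eLpNorm_neg]
      congr 1
      ext x
      simp [Pi.sub_apply]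
    rw [h3]
    calc (eLpNorm ((↑f : ℝ → ℂ) - g) 2 volume).toReal ≤ (ENNReal.ofReal (ε / 2)).toReal :=
          ENNReal.toReal_mono (by simp) hgel
      _ = ε / 2 := ENNReal.toReal_ofReal (half_pos hε).le
  calc dist (F.symm f) (F f)
      ≤ dist (F.symm f) (F.symm (hgm.toLp g)) + dist (F.symm (hgm.toLp g)) (F f) :=
        dist_triangle _ _ _
    _ = dist f (hgm.toLp g) + dist ((memLp_comp_neg hgm).toLp (fun x ↦ g (-x))) f := by
        rw [F.symm.dist_map, symm_toLp F hF hgi hgm, F.dist_map]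
    _ ≤ ε / 2 + ε / 2 := by
        refine add_le_add ?_ hstep
        rw [dist_eq_norm]
        exact hgle
    _ = ε := by ring

lemma Pproj_coe (lam : ℝ) (u : Lp ℂ 2 (volume : Measure ℝ)) :
    (Pproj lam u : ℝ → ℂ) =ᵐ[volume] (Ioo (-lam) lam).indicator u :=
  MemLp.coeFn_toLp _

lemma Pproj_eq_zero_iff (lam : ℝ) (u : Lp ℂ 2 (volume : Measure ℝ)) :
    Pproj lam u = 0 ↔ ∀ᵐ x : ℝ, x ∈ Ioo (-lam) lam → u x = 0 := by
  have hcoe := Pproj_coe lam u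
  rw [Lp.eq_zero_iff_ae_eq_zero]
  constructor
  · intro h
    filter_upwards [hcoe.symm.trans h] with x hx hmem
    rw [Pi.zero_apply] at hx
    rwa [indicator_of_mem hmem] at hx
  · intro h
    refine hcoe.trans ?_
    filter_upwards [h] with x hx
    rw [Pi.zero_apply]
    by_cases hmem : x ∈ Ioo (-lam) lam
    · rw [indicator_of_mem hmem]; exact hx hmem
    · rw [indicator_of_notMem hmem]

/-- inner product of `Pproj lam u` with `u` is the squared norm. -/
lemma inner_Pproj (lam : ℝ) (u : Lp ℂ 2 (volume : Measure ℝ)) :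
    ⟪Pproj lam u, u⟫ = ⟪Pproj lam u, Pproj lam u⟫ := by
  rw [L2.inner_def, L2.inner_def]
  refine integral_congr_ae ?_
  filter_upwards [Pproj_coe lam u] with a ha
  rw [ha, RCLike.inner_apply, RCLike.inner_apply]
  by_cases hx : a ∈ Ioo (-lam) lam
  · simp [indicator_of_mem hx]
  · simp [indicator_of_notMem hx]

/-- For even `f ∈ L²(ℝ)`: `P_λ f + ℱ P_λ ℱ⁻¹ f = 0` iff `f` is a Sonine function
(`f = 0` a.e. on `(−λ,λ)` and `ℱf = 0` a.e. on `(−λ,λ)`). -/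
theorem sonine_iff_ker (lam : ℝ) (hlam : 0 < lam)
    (F : Lp ℂ 2 (volume : Measure ℝ) ≃ₗᵢ[ℂ] Lp ℂ 2 (volume : Measure ℝ))
    (hF : IsFourierPlancherel F)
    (f : Lp ℂ 2 (volume : Measure ℝ))
    (heven : ∀ᵐ x : ℝ, f (-x) = f x) :
    Pproj lam f + F (Pproj lam (F.symm f)) = 0 ↔
      ((∀ᵐ x : ℝ, x ∈ Ioo (-lam) lam → f x = 0) ∧
       (∀ᵐ x : ℝ, x ∈ Ioo (-lam) lam → (F f) x = 0)) := by
  have hsymm : F.symm f = F f := symm_even F hF f heven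
  constructor
  · intro h
    have h3 : ⟪F (Pproj lam (F.symm f)), f⟫ = ⟪Pproj lam (F.symm f), F.symm f⟫ := by
      have h4 := F.inner_map_map (Pproj lam (F.symm f)) (F.symm f)
      rwa [F.apply_symm_apply] at h4
    have h2 : ⟪Pproj lam f, f⟫ + ⟪Pproj lam (F.symm f), F.symm f⟫ = 0 := by
      rw [← h3, ← inner_add_left, h, inner_zero_left]
    rw [inner_Pproj, inner_Pproj, inner_self_eq_norm_sq_to_K, inner_self_eq_norm_sq_to_K] at h2
    have h4 : ‖Pproj lam f‖ ^ 2 + ‖Pproj lam (F.symm f)‖ ^ 2 = 0 := by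
      have h5 : ((‖Pproj lam f‖ ^ 2 + ‖Pproj lam (F.symm f)‖ ^ 2 : ℝ) : ℂ) = 0 := by
        push_cast
        exact h2
      exact_mod_cast h5
    have hPf : Pproj lam f = 0 := by
      refine norm_eq_zero.1 ?_
      nlinarith [norm_nonneg (Pproj lam f), norm_nonneg (Pproj lam (F.symm f)),
        sq_nonneg ‖Pproj lam f‖, sq_nonneg ‖Pproj lam (F.symm f)‖]
    have hPg : Pproj lam (F.symm f) = 0 := by
      refine norm_eq_zero.1 ?_
      nlinarith [norm_nonneg (Pproj lam f), norm_nonneg (Pproj lam (F.symm f)),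
        sq_nonneg ‖Pproj lam f‖, sq_nonneg ‖Pproj lam (F.symm f)‖]
    rw [hsymm] at hPg
    exact ⟨(Pproj_eq_zero_iff _ _).1 hPf, (Pproj_eq_zero_iff _ _).1 hPg⟩
  · rintro ⟨h1, h2⟩
    have hPf : Pproj lam f = 0 := (Pproj_eq_zero_iff _ _).2 h1
    have hPg : Pproj lam (F.symm f) = 0 := by
      rw [hsymm]; exact (Pproj_eq_zero_iff _ _).2 h2
    rw [hPf, hPg, map_zero, add_zero]
end
end

section
/- Let λ > 0 and let f ∈ L²(ℝ) be even and vanish a.e. outside (−λ,λ). Then for a.e. x ∈ (−λ,λ), (F_λ(F_λ f))(x) = ∫_{−λ}^{λ} (sin(2πλ(x−y))/(π(x−y))) f(y) dy; that is, on even functions supported in (−λ,λ) the operator D_λ = F_λ² coincides with the integral operator with Dirichlet kernel sin(2πλ(x−y))/(π(x−y)) restricted to (−λ,λ). -/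
open MeasureTheory Complex Set FourierTransform

noncomputable section

section DirichletAux
lemma finv_eq (φ : ℝ → ℂ) (w : ℝ) :
    𝓕⁻ φ w = ∫ v : ℝ, Complex.exp ((2 * Real.pi * v * w : ℝ) * Complex.I) * φ v := by
  rw [Real.fourierInv_eq']
  congr 1
  ext v
  rw [smul_eq_mul]
  norm_num [RCLike.inner_apply, conj_trivial, mul_assoc]
  left; ring_nf

lemma kernelInt (lam : ℝ) (hlam : 0 < lam) (s : ℝ) :
    (∫ t in Ioo (-lam) lam, Complex.exp ((2 * Real.pi * s * t : ℝ) * Complex.I)) =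
      if s = 0 then ((2 * lam : ℝ) : ℂ)
      else ((Real.sin (2 * Real.pi * lam * s) / (Real.pi * s) : ℝ) : ℂ) := by
  rcases eq_or_ne s 0 with rfl | hs
  · simp only [mul_zero, zero_mul, Complex.ofReal_zero, Complex.exp_zero, if_true]
    rw [setIntegral_const]
    rw [measureReal_def, Real.volume_Ioo]
    rw [ENNReal.toReal_ofReal (by linarith : (0:ℝ) ≤ lam - -lam)]
    push_cast
    ring_nf
    norm_num [smul_eq_mul]
  · rw [if_neg hs, ← integral_Ioc_eq_integral_Ioo,
      ← intervalIntegral.integral_of_le (by linarith : -lam ≤ lam)]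
    have hc : ((2 * Real.pi * s : ℝ) : ℂ) * Complex.I ≠ 0 := by
      apply mul_ne_zero _ Complex.I_ne_zero
      exact_mod_cast mul_ne_zero (by positivity) hs
    have harg : ∀ t : ℝ, ((2 * Real.pi * s * t : ℝ) : ℂ) * Complex.I
        = (((2 * Real.pi * s : ℝ) : ℂ) * Complex.I) * (t : ℂ) := by
      intro t; push_cast; ring
    simp only [harg]
    rw [integral_exp_mul_complex hc]
    have e1 : (((2 * Real.pi * s : ℝ) : ℂ) * Complex.I) * ((lam : ℝ) : ℂ)
        = ((2 * Real.pi * s * lam : ℝ) : ℂ) * Complex.I := by push_cast; ring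
    have e2 : (((2 * Real.pi * s : ℝ) : ℂ) * Complex.I) * (((-lam : ℝ)) : ℂ)
        = ((-(2 * Real.pi * s * lam) : ℝ) : ℂ) * Complex.I := by push_cast; ring
    rw [show ((-lam : ℝ) : ℂ) = (((-lam : ℝ)) : ℂ) from rfl, e1, e2]
    have key : ∀ θ : ℝ, Complex.exp ((θ : ℂ) * Complex.I) - Complex.exp (((-θ : ℝ) : ℂ) * Complex.I)
        = 2 * ((Real.sin θ : ℝ) : ℂ) * Complex.I := by
      intro θ
      rw [Complex.exp_mul_I, Complex.exp_mul_I]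
      push_cast
      rw [Complex.cos_neg, Complex.sin_neg]
      ring
    rw [key]
    have h2 : ((Real.pi * s : ℝ) : ℂ) ≠ 0 := by
      exact_mod_cast mul_ne_zero Real.pi_ne_zero hs
    have harg2 : 2 * Real.pi * lam * s = 2 * Real.pi * s * lam := by ring
    rw [harg2, Complex.ofReal_div, div_eq_div_iff hc h2]
    push_cast
    ring


lemma main_calc (lam : ℝ) (hlam : 0 < lam) (f₀ : ℝ → ℂ) (hf₀ : Integrable f₀ volume)
    (hsupp₀ : ∀ y, y ∉ Ioo (-lam) lam → f₀ y = 0)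
    (heven₀ : ∀ᵐ y : ℝ, f₀ (-y) = f₀ y) (x : ℝ) :
    𝓕⁻ ((Ioo (-lam) lam).indicator (𝓕⁻ f₀)) x
      = ∫ y in Ioo (-lam) lam,
          (((if x = y then 2 * lam
              else Real.sin (2 * Real.pi * lam * (x - y)) / (Real.pi * (x - y))) : ℝ) : ℂ)
            * f₀ y := by
  have hfin : IsFiniteMeasure (volume.restrict (Ioo (-lam) lam)) := by
    constructor
    rw [Measure.restrict_apply_univ, Real.volume_Ioo]
    exact ENNReal.ofReal_lt_top
  rw [finv_eq]
  have hind : ∀ v : ℝ, Complex.exp ((2 * Real.pi * v * x : ℝ) * Complex.I)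
        * (Ioo (-lam) lam).indicator (𝓕⁻ f₀) v
      = (Ioo (-lam) lam).indicator
          (fun v => Complex.exp ((2 * Real.pi * v * x : ℝ) * Complex.I)
            * 𝓕⁻ f₀ v) v := by
    intro v
    by_cases hv : v ∈ Ioo (-lam) lam <;> simp [hv]
  simp_rw [hind]
  rw [integral_indicator measurableSet_Ioo]
  simp_rw [finv_eq f₀, ← integral_const_mul]
  -- Fubini
  have hInt : Integrable (Function.uncurry fun (v : ℝ) (y : ℝ) =>
      Complex.exp ((2 * Real.pi * v * x : ℝ) * Complex.I)
        * (Complex.exp ((2 * Real.pi * y * v : ℝ) * Complex.I) * f₀ y))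
      ((volume.restrict (Ioo (-lam) lam)).prod volume) := by
    have hcont : Continuous fun p : ℝ × ℝ =>
        Complex.exp ((2 * Real.pi * p.1 * x : ℝ) * Complex.I)
          * Complex.exp ((2 * Real.pi * p.2 * p.1 : ℝ) * Complex.I) := by fun_prop
    have hmeas : AEStronglyMeasurable (Function.uncurry fun (v : ℝ) (y : ℝ) =>
        Complex.exp ((2 * Real.pi * v * x : ℝ) * Complex.I)
          * (Complex.exp ((2 * Real.pi * y * v : ℝ) * Complex.I) * f₀ y))
        ((volume.restrict (Ioo (-lam) lam)).prod volume) := by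
      have := hcont.aestronglyMeasurable
        (μ := (volume.restrict (Ioo (-lam) lam)).prod volume)
      have h2 : AEStronglyMeasurable (fun p : ℝ × ℝ => f₀ p.2)
          ((volume.restrict (Ioo (-lam) lam)).prod volume) := hf₀.1.comp_snd
      have := this.mul h2
      apply this.congr
      apply Filter.Eventually.of_forall
      intro p
      simp [Function.uncurry]
      ring
    rw [integrable_prod_iff hmeas]
    constructor
    · apply Filter.Eventually.of_forall
      intro v
      simp only [Function.uncurry]
      apply Integrable.const_mul
      apply hf₀.bdd_mul
      · apply Continuous.aestronglyMeasurable; fun_prop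
      · exact Filter.Eventually.of_forall (fun y => (Complex.norm_exp_ofReal_mul_I _).le)
    · have : (fun v : ℝ => ∫ y, ‖Complex.exp ((2 * Real.pi * v * x : ℝ) * Complex.I)
          * (Complex.exp ((2 * Real.pi * y * v : ℝ) * Complex.I) * f₀ y)‖)
          = fun _ => ∫ y, ‖f₀ y‖ := by
        ext v
        congr 1
        ext y
        simp only [Function.uncurry, norm_mul,
          Complex.norm_exp_ofReal_mul_I, one_mul]
      rw [Function.uncurry_def]
      simp only [this]
      exact integrable_const _
  rw [integral_integral_swap hInt]
  -- combine exponentials and pull out f₀ y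
  have hcomb : ∀ (y v : ℝ), Complex.exp ((2 * Real.pi * v * x : ℝ) * Complex.I)
        * (Complex.exp ((2 * Real.pi * y * v : ℝ) * Complex.I) * f₀ y)
      = Complex.exp ((2 * Real.pi * (x + y) * v : ℝ) * Complex.I) * f₀ y := by
    intro y v
    rw [← mul_assoc, ← Complex.exp_add]
    congr 2
    push_cast
    ring
  simp_rw [hcomb, integral_mul_const, kernelInt lam hlam]
  -- substitution y ↦ -y
  have hneg : (∫ y : ℝ, (if x + y = 0 then ((2 * lam : ℝ) : ℂ)
        else ((Real.sin (2 * Real.pi * lam * (x + y)) / (Real.pi * (x + y)) : ℝ) : ℂ)) * f₀ y)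
      = ∫ y : ℝ, (if x - y = 0 then ((2 * lam : ℝ) : ℂ)
        else ((Real.sin (2 * Real.pi * lam * (x - y)) / (Real.pi * (x - y)) : ℝ) : ℂ)) * f₀ (-y) := by
    rw [← integral_neg_eq_self (fun y : ℝ => (if x - y = 0 then ((2 * lam : ℝ) : ℂ)
        else ((Real.sin (2 * Real.pi * lam * (x - y)) / (Real.pi * (x - y)) : ℝ) : ℂ)) * f₀ (-y)) volume]
    congr 1
    ext y
    simp [sub_neg_eq_add]
  rw [hneg]
  have heq : (fun y : ℝ => (if x - y = 0 then ((2 * lam : ℝ) : ℂ)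
        else ((Real.sin (2 * Real.pi * lam * (x - y)) / (Real.pi * (x - y)) : ℝ) : ℂ)) * f₀ (-y))
      =ᵐ[volume] fun y : ℝ => (if x - y = 0 then ((2 * lam : ℝ) : ℂ)
        else ((Real.sin (2 * Real.pi * lam * (x - y)) / (Real.pi * (x - y)) : ℝ) : ℂ)) * f₀ y := by
    filter_upwards [heven₀] with y hy
    rw [hy]
  rw [integral_congr_ae heq]
  rw [← setIntegral_eq_integral_of_forall_compl_eq_zero
    (fun y hy => by rw [hsupp₀ y hy, mul_zero])]
  apply setIntegral_congr_fun measurableSet_Ioo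
  intro y _
  dsimp only
  by_cases hxy : x = y
  · simp [hxy]
  · rw [if_neg (sub_ne_zero.mpr hxy), if_neg hxy]
end DirichletAux

/-- On even functions supported in `(−λ,λ)` the operator `D_λ = F_λ²` is the integral
operator with the Dirichlet kernel `sin(2πλ(x−y))/(π(x−y))` on `(−λ,λ)`. -/
theorem Dlambda_dirichlet_kernel (lam : ℝ) (hlam : 0 < lam)
    (F : Lp ℂ 2 (volume : Measure ℝ) ≃ₗᵢ[ℂ] Lp ℂ 2 (volume : Measure ℝ))
    (hF : IsFourierPlancherel F)
    (f : Lp ℂ 2 (volume : Measure ℝ))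
    (heven : ∀ᵐ x : ℝ, f (-x) = f x)
    (hsupp : ∀ᵐ x : ℝ, x ∉ Ioo (-lam) lam → f x = 0) :
    ∀ᵐ x : ℝ, x ∈ Ioo (-lam) lam →
      (Pproj lam (F (Pproj lam (Pproj lam (F (Pproj lam f)))))) x =
        ∫ y in Ioo (-lam) lam,
          (((if x = y then 2 * lam
              else Real.sin (2 * Real.pi * lam * (x - y)) / (Real.pi * (x - y))) : ℝ) : ℂ)
            * f y := by
  have hIoo : volume (Ioo (-lam) lam) ≠ ⊤ := by
    rw [Real.volume_Ioo]; exact ENNReal.ofReal_ne_top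
  set f₀ : ℝ → ℂ := (Ioo (-lam) lam).indicator f with hf₀def
  have hf₀2 : MemLp f₀ 2 volume := (Lp.memLp f).indicator measurableSet_Ioo
  have hsupp₀ : ∀ y, y ∉ Ioo (-lam) lam → f₀ y = 0 :=
    fun y hy => indicator_of_notMem hy _
  have hf₀int : Integrable f₀ volume := memLp_one_iff_integrable.mp
    (hf₀2.mono_exponent_of_measure_support_ne_top hsupp₀ hIoo one_le_two)
  have heven₀ : ∀ᵐ y : ℝ, f₀ (-y) = f₀ y := by
    filter_upwards [heven] with y hy
    have hmem : -y ∈ Ioo (-lam) lam ↔ y ∈ Ioo (-lam) lam := by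
      simp only [mem_Ioo]
      constructor <;> intro h <;> constructor <;> linarith [h.1, h.2]
    by_cases hm : y ∈ Ioo (-lam) lam
    · rw [hf₀def, indicator_of_mem (hmem.mpr hm), indicator_of_mem hm, hy]
    · rw [hf₀def, indicator_of_notMem (fun h => hm (hmem.mp h)),
        indicator_of_notMem hm]
  have e0 : Pproj lam f = hf₀2.toLp f₀ := rfl
  set A := F (Pproj lam f) with hAdef
  have hA : (A : ℝ → ℂ) =ᵐ[volume] 𝓕⁻ f₀ := by
    rw [hAdef, e0]; exact hF f₀ hf₀int hf₀2
  set g₀ : ℝ → ℂ := (Ioo (-lam) lam).indicator (𝓕⁻ f₀) with hg₀def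
  have hAind : (Ioo (-lam) lam).indicator (A : ℝ → ℂ) =ᵐ[volume] g₀ := by
    filter_upwards [hA] with y hy
    by_cases hm : y ∈ Ioo (-lam) lam
    · rw [indicator_of_mem hm, hg₀def, indicator_of_mem hm, hy]
    · rw [indicator_of_notMem hm, hg₀def, indicator_of_notMem hm]
  have hg₀2 : MemLp g₀ 2 volume :=
    ((Lp.memLp A).indicator measurableSet_Ioo).ae_eq hAind
  have hsuppg₀ : ∀ y, y ∉ Ioo (-lam) lam → g₀ y = 0 :=
    fun y hy => indicator_of_notMem hy _
  have hg₀int : Integrable g₀ volume := memLp_one_iff_integrable.mp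
    (hg₀2.mono_exponent_of_measure_support_ne_top hsuppg₀ hIoo one_le_two)
  have e2 : Pproj lam A = hg₀2.toLp g₀ :=
    MemLp.toLp_congr (f := (Ioo (-lam) lam).indicator (A : ℝ → ℂ)) (g := g₀) ((Lp.memLp A).indicator measurableSet_Ioo) hg₀2 hAind
  have h1 : (hg₀2.toLp g₀ : ℝ → ℂ) =ᵐ[volume] g₀ := hg₀2.coeFn_toLp
  have h2 : (Ioo (-lam) lam).indicator (hg₀2.toLp g₀ : ℝ → ℂ) =ᵐ[volume] g₀ := by
    filter_upwards [h1] with y hy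
    by_cases hm : y ∈ Ioo (-lam) lam
    · rw [indicator_of_mem hm, hy]
    · rw [indicator_of_notMem hm, eq_comm]
      exact hsuppg₀ y hm
  have e3 : Pproj lam (hg₀2.toLp g₀) = hg₀2.toLp g₀ :=
    MemLp.toLp_congr (f := (Ioo (-lam) lam).indicator (hg₀2.toLp g₀ : ℝ → ℂ)) (g := g₀) ((Lp.memLp (hg₀2.toLp g₀)).indicator measurableSet_Ioo) hg₀2 h2
  have hB : ((F (hg₀2.toLp g₀)) : ℝ → ℂ) =ᵐ[volume] 𝓕⁻ g₀ :=
    hF g₀ hg₀int hg₀2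
  have hfinal : ((Pproj lam (F (hg₀2.toLp g₀))) : ℝ → ℂ) =ᵐ[volume]
      (Ioo (-lam) lam).indicator (𝓕⁻ g₀) := by
    have hc : ((Pproj lam (F (hg₀2.toLp g₀))) : ℝ → ℂ) =ᵐ[volume]
        (Ioo (-lam) lam).indicator ((F (hg₀2.toLp g₀)) : ℝ → ℂ) :=
      MemLp.coeFn_toLp _
    filter_upwards [hc, hB] with y hy hy'
    rw [hy]
    by_cases hm : y ∈ Ioo (-lam) lam
    · rw [indicator_of_mem hm, indicator_of_mem hm, hy']
    · rw [indicator_of_notMem hm, indicator_of_notMem hm]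
  have e4 : Pproj lam (Pproj lam (F (Pproj lam f))) = hg₀2.toLp g₀ := by
    rw [← hAdef, e2, e3]
  rw [e4]
  filter_upwards [hfinal] with x hx hmem
  rw [hx, indicator_of_mem hmem, hg₀def, main_calc lam hlam f₀ hf₀int hsupp₀ heven₀ x]
  apply setIntegral_congr_fun measurableSet_Ioo
  intro y hy
  dsimp only
  rw [hf₀def, indicator_of_mem hy]
end
end

section
/- Let λ > 0 and let f ∈ L²(ℝ) be even with f = 0 a.e. on (−λ,λ). Let v be the unique even function in L²(ℝ) vanishing a.e. outside (−λ,λ) with v − D_λ v = P_λ(ℱf), where D_λ = (P_λ ℱ P_λ)². Then the orthogonal projection of f onto the Sonine space K_λ is the function equal to f(t) − (ℱv)(t) for a.e. t with |t| > λ and equal to 0 on (−λ,λ). -/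
open MeasureTheory Complex Set FourierTransform

noncomputable section

/-- The Sonine space `K_λ`: even `f ∈ L²(ℝ)` with `f = 0` a.e. on `(−λ,λ)` and
`ℱf = 0` a.e. on `(−λ,λ)`. -/
def Kset (lam : ℝ)
    (F : Lp ℂ 2 (volume : Measure ℝ) ≃ₗᵢ[ℂ] Lp ℂ 2 (volume : Measure ℝ)) :
    Set (Lp ℂ 2 (volume : Measure ℝ)) :=
  {g | (∀ᵐ x : ℝ, g (-x) = g x) ∧
       (∀ᵐ x : ℝ, x ∈ Ioo (-lam) lam → g x = 0) ∧
       (∀ᵐ x : ℝ, x ∈ Ioo (-lam) lam → (F g) x = 0)}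

/-- The operator `F_λ = P_λ ℱ P_λ`. -/
def Fop (lam : ℝ)
    (F : Lp ℂ 2 (volume : Measure ℝ) ≃ₗᵢ[ℂ] Lp ℂ 2 (volume : Measure ℝ))
    (f : Lp ℂ 2 (volume : Measure ℝ)) : Lp ℂ 2 (volume : Measure ℝ) :=
  Pproj lam (F (Pproj lam f))



lemma negMP : MeasurePreserving (fun x : ℝ => -x) volume volume :=
  Measure.measurePreserving_neg _

lemma conj_fourierInv (g : ℝ → ℂ) (x : ℝ) :
    FourierTransformInv.fourierInv (fun y => starRingEnd ℂ (g (-y))) x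
      = starRingEnd ℂ (FourierTransformInv.fourierInv g x) := by
  rw [Real.fourierInv_eq', Real.fourierInv_eq', ← integral_conj]
  rw [← negMP.integral_comp (Homeomorph.neg ℝ).measurableEmbedding
      (fun y => starRingEnd ℂ (Complex.exp ((↑(2 * Real.pi * inner ℝ y x) * Complex.I)) • g y))]
  congr 1
  funext y
  simp only [smul_eq_mul, map_mul]
  congr 1
  rw [← Complex.exp_conj]
  congr 1
  simp only [RCLike.inner_apply', starRingEnd_apply, star_trivial]
  rw [star_mul', Complex.star_def, Complex.conj_I, Complex.conj_ofReal]
  push_cast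
  ring

lemma flip_formula (g k : ℝ → ℂ) (hg : Integrable g volume) (hk : Integrable k volume) :
    ∫ x, FourierTransformInv.fourierInv g x * k x = ∫ y, g y * FourierTransformInv.fourierInv k y := by
  have hflip : (-innerₗ ℝ).flip = -innerₗ ℝ := by
    refine LinearMap.ext fun v => LinearMap.ext fun w => ?_
    simp [LinearMap.flip_apply, real_inner_comm, mul_comm]
  have := VectorFourier.integral_fourierIntegral_smul_eq_flip (μ := (volume : Measure ℝ))
    (ν := (volume : Measure ℝ)) (L := -innerₗ ℝ) (f := g) (g := k)
    Real.continuous_fourierChar (by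
      simp only [LinearMap.neg_apply, innerₗ_apply_apply, RCLike.inner_apply', starRingEnd_apply,
        star_trivial]
      exact (continuous_fst.mul continuous_snd).neg) hg hk
  simp only [hflip, smul_eq_mul] at this
  exact this

abbrev L2R := Lp ℂ 2 (volume : Measure ℝ)

def Rop (g : L2R) : L2R :=
  Lp.compMeasurePreserving (fun x : ℝ => -x) negMP g

lemma coeFn_Rop (g : L2R) : ⇑(Rop g) =ᵐ[volume] fun x => g (-x) :=
  Lp.coeFn_compMeasurePreserving g negMP

variable {F : Lp ℂ 2 (volume : Measure ℝ) ≃ₗᵢ[ℂ] Lp ℂ 2 (volume : Measure ℝ)}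

lemma hF_ae (hF : IsFourierPlancherel F) (g : L2R) (hint : Integrable (⇑g) volume) :
    (F g : ℝ → ℂ) =ᵐ[volume] FourierTransformInv.fourierInv ⇑g := by
  have := hF (⇑g) hint (Lp.memLp g)
  rwa [Lp.toLp_coeFn g (Lp.memLp g)] at this

lemma integrable_simple (h : Lp.simpleFunc ℂ 2 (volume : Measure ℝ)) :
    Integrable (⇑(h : L2R)) volume := by
  have h1 : Integrable (Lp.simpleFunc.toSimpleFunc h) volume :=
    (SimpleFunc.memLp_iff_integrable two_ne_zero ENNReal.ofNat_ne_top).mp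
      (Lp.simpleFunc.memLp h)
  exact h1.congr (Lp.simpleFunc.toSimpleFunc_eq_toFun h)

lemma FF_eq_Rop (hF : IsFourierPlancherel F) (g : L2R) : F (F g) = Rop g := by
  have key : ∀ (a : L2R), Integrable (⇑a) volume → F (F a) = Rop a := by
    intro a ha
    have inner_eq : ∀ (h : Lp.simpleFunc ℂ 2 (volume : Measure ℝ)),
        inner (𝕜 := ℂ) (F (F a)) (F (h : L2R)) = inner (𝕜 := ℂ) (Rop a) (F (h : L2R)) := by
      intro h
      have hh := integrable_simple h
      rw [LinearIsometryEquiv.inner_map_map]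
      rw [MeasureTheory.L2.inner_def, MeasureTheory.L2.inner_def]
      have e1 : (fun x => (inner ℂ ((F a) x) ((h : L2R) x) : ℂ))
          =ᵐ[volume] fun x => starRingEnd ℂ (FourierTransformInv.fourierInv (⇑a) x) * (h : L2R) x := by
        filter_upwards [hF_ae hF a ha] with x hx
        rw [RCLike.inner_apply', hx]
      have e2 : (fun x => (inner ℂ ((Rop a) x) ((F (h : L2R)) x) : ℂ))
          =ᵐ[volume] fun x => starRingEnd ℂ (a (-x)) * FourierTransformInv.fourierInv (⇑(h : L2R)) x := by
        filter_upwards [coeFn_Rop a, hF_ae hF (h : L2R) hh] with x h1 h2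
        rw [RCLike.inner_apply', h1, h2]
      rw [integral_congr_ae e1, integral_congr_ae e2]
      have hpt : ∀ x, starRingEnd ℂ (FourierTransformInv.fourierInv (⇑a) x)
          = FourierTransformInv.fourierInv (fun y => starRingEnd ℂ (a (-y))) x :=
        fun x => (conj_fourierInv _ x).symm
      simp_rw [hpt]
      have hca : Integrable (fun y => starRingEnd ℂ (a (-y))) volume := by
        have h1 : Integrable ((⇑a) ∘ (fun x : ℝ => -x)) volume :=
          (negMP.integrable_comp ha.aestronglyMeasurable).mpr ha
        simpa using (Complex.conjCLE.toContinuousLinearMap).integrable_comp h1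
      exact flip_formula _ _ hca hh
    -- conclude from density of F composed with simpleFunc
    have hd : DenseRange (fun h : Lp.simpleFunc ℂ 2 (volume : Measure ℝ) => F (h : L2R)) := by
      have h1 : DenseRange ((↑) : Lp.simpleFunc ℂ 2 (volume : Measure ℝ) → L2R) :=
        Lp.simpleFunc.denseRange ENNReal.ofNat_ne_top
      have h2 : DenseRange (⇑F) := F.surjective.denseRange
      exact h2.comp h1 F.continuous
    have hall : ∀ w : L2R, inner (𝕜 := ℂ) (F (F a)) w = inner (𝕜 := ℂ) (Rop a) w := by
      have hc1 : Continuous fun w : L2R => inner (𝕜 := ℂ) (F (F a)) w := continuous_inner.comp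
        (continuous_const.prodMk continuous_id)
      have hc2 : Continuous fun w : L2R => inner (𝕜 := ℂ) (Rop a) w := continuous_inner.comp
        (continuous_const.prodMk continuous_id)
      have heq := Continuous.ext_on hd hc1 hc2 (by
        rintro w ⟨h, rfl⟩
        exact inner_eq h)
      exact fun w => congrFun heq w
    exact ext_inner_right ℂ fun w => hall w
  -- extend to all of L² by density
  have hc1 : Continuous fun a : L2R => F (F a) := F.continuous.comp F.continuous
  have hc2 : Continuous (Rop : L2R → L2R) :=
    (Lp.isometry_compMeasurePreserving (E := ℂ) negMP).continuous
  have heq := Continuous.ext_on (Lp.simpleFunc.denseRange (E := ℂ) (p := 2)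
      (μ := (volume : Measure ℝ)) ENNReal.ofNat_ne_top) hc1 hc2 (by
    rintro a ⟨h, rfl⟩
    exact key _ (integrable_simple h))
  exact congrFun heq g

lemma ae_neg' {P : ℝ → Prop} (h : ∀ᵐ x : ℝ, P x) : ∀ᵐ x : ℝ, P (-x) :=
  (negMP.quasiMeasurePreserving.tendsto_ae).eventually h

lemma coeFn_Pproj (lam : ℝ) (g : L2R) :
    ⇑(Pproj lam g) =ᵐ[volume] (Ioo (-lam) lam).indicator ⇑g :=
  MemLp.coeFn_toLp _

lemma Rop_eq_self_of_even {g : L2R} (h : ∀ᵐ x : ℝ, g (-x) = g x) : Rop g = g :=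
  Lp.ext ((coeFn_Rop g).trans h)

lemma Rop_comm (hF : IsFourierPlancherel F) (g : L2R) : Rop (F g) = F (Rop g) := by
  rw [← FF_eq_Rop hF, ← FF_eq_Rop hF g]

lemma inner_zero_of_supports (lam : ℝ) (a b : L2R)
    (ha : ∀ᵐ x : ℝ, x ∉ Ioo (-lam) lam → a x = 0)
    (hb : ∀ᵐ x : ℝ, x ∈ Ioo (-lam) lam → b x = 0) :
    inner (𝕜 := ℂ) a b = 0 := by
  rw [MeasureTheory.L2.inner_def, ← integral_zero ℝ ℂ]
  apply integral_congr_ae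
  filter_upwards [ha, hb] with x h1 h2
  by_cases hx : x ∈ Ioo (-lam) lam
  · rw [RCLike.inner_apply', h2 hx, mul_zero]
  · rw [RCLike.inner_apply', h1 hx, map_zero, zero_mul]

lemma Kset_sub (lam : ℝ) {a b : L2R} (ha : a ∈ Kset lam F) (hb : b ∈ Kset lam F) :
    a - b ∈ Kset lam F := by
  obtain ⟨ha1, ha2, ha3⟩ := ha
  obtain ⟨hb1, hb2, hb3⟩ := hb
  refine ⟨?_, ?_, ?_⟩
  · filter_upwards [Lp.coeFn_sub a b, ae_neg' (Lp.coeFn_sub a b), ha1, hb1] with x h1 h2 h3 h4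
    rw [h1, h2, Pi.sub_apply, Pi.sub_apply, h3, h4]
  · filter_upwards [Lp.coeFn_sub a b, ha2, hb2] with x h1 h2 h3 hx
    rw [h1, Pi.sub_apply, h2 hx, h3 hx, sub_zero]
  · have : F (a - b) = F a - F b := map_sub F a b
    filter_upwards [this ▸ Lp.coeFn_sub (F a) (F b), ha3, hb3] with x h1 h2 h3 hx
    rw [h1, Pi.sub_apply, h2 hx, h3 hx, sub_zero]

lemma Pproj_idem (lam : ℝ) (g : L2R) : Pproj lam (Pproj lam g) = Pproj lam g := by
  apply Lp.ext
  refine (coeFn_Pproj lam _).trans ?_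
  filter_upwards [coeFn_Pproj lam g] with x hx
  by_cases h : x ∈ Ioo (-lam) lam
  · rw [indicator_of_mem h]
  · rw [indicator_of_notMem h, hx, indicator_of_notMem h]

/-- If `f ∈ L²(ℝ)` is even and vanishes a.e. on `(−λ,λ)`, and `v − D_λ v = P_λ ℱf`,
then the orthogonal projection of `f` onto the Sonine space `K_λ` equals
`f − ℱv` for `|t| > λ` and vanishes on `(−λ,λ)`. -/
theorem projection_onto_sonine_of_vanishing (lam : ℝ) (hlam : 0 < lam)
    (F : Lp ℂ 2 (volume : Measure ℝ) ≃ₗᵢ[ℂ] Lp ℂ 2 (volume : Measure ℝ))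
    (hF : IsFourierPlancherel F)
    (f v : Lp ℂ 2 (volume : Measure ℝ))
    (heven : ∀ᵐ x : ℝ, f (-x) = f x)
    (hf0 : ∀ᵐ x : ℝ, x ∈ Ioo (-lam) lam → f x = 0)
    (hve : ∀ᵐ x : ℝ, v (-x) = v x) (hvs : ∀ᵐ x : ℝ, x ∉ Ioo (-lam) lam → v x = 0)
    (hv : v - Fop lam F (Fop lam F v) = Pproj lam (F f)) :
    ∀ p : Lp ℂ 2 (volume : Measure ℝ),
      p ∈ Kset lam F → (∀ g ∈ Kset lam F, inner (𝕜 := ℂ) (f - p) g = (0 : ℂ)) →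
      (∀ᵐ t : ℝ, lam < |t| → p t = f t - (F v) t) ∧
      (∀ᵐ t : ℝ, t ∈ Ioo (-lam) lam → p t = 0) := by
  intro p hp hporth
  obtain ⟨hpe, hps, hpF⟩ := hp
  have hq_coe : ⇑(f - F v + Pproj lam (F v)) =ᵐ[volume]
      fun x => f x - (F v) x + (Ioo (-lam) lam).indicator (⇑(F v)) x := by
    filter_upwards [Lp.coeFn_add (f - F v) (Pproj lam (F v)), Lp.coeFn_sub f (F v),
      coeFn_Pproj lam (F v)] with x h1 h2 h3
    rw [h1, Pi.add_apply, h2, Pi.sub_apply, h3]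
  set q : Lp ℂ 2 (volume : Measure ℝ) := f - F v + Pproj lam (F v) with hq
  have hvRop : Rop v = v := Rop_eq_self_of_even hve
  have hFve : ∀ᵐ x : ℝ, (F v) (-x) = (F v) x := by
    have h1 : Rop (F v) = F v := by rw [Rop_comm hF, hvRop]
    have h2 := coeFn_Rop (F v)
    rw [h1] at h2
    exact h2.symm
  have hPv : Pproj lam v = v := by
    apply Lp.ext
    refine (coeFn_Pproj lam v).trans ?_
    filter_upwards [hvs] with x hx
    by_cases h : x ∈ Ioo (-lam) lam
    · rw [indicator_of_mem h]
    · rw [indicator_of_notMem h, hx h]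
  have hv' : v - Pproj lam (F (Pproj lam (F v))) = Pproj lam (F f) := by
    simpa only [Fop, hPv, Pproj_idem] using hv
  have hv'' : ∀ᵐ x : ℝ, x ∈ Ioo (-lam) lam →
      v x - (F (Pproj lam (F v))) x = (F f) x := by
    have hcoe : ⇑(v - Pproj lam (F (Pproj lam (F v)))) =ᵐ[volume] ⇑(Pproj lam (F f)) := by
      rw [hv']
    filter_upwards [hcoe, Lp.coeFn_sub v (Pproj lam (F (Pproj lam (F v)))),
      coeFn_Pproj lam (F (Pproj lam (F v))), coeFn_Pproj lam (F f)] with x h1 h2 h3 h4 hx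
    rw [h2, Pi.sub_apply, h3] at h1
    rw [h4, indicator_of_mem hx] at h1
    rw [indicator_of_mem hx] at h1
    exact h1
  -- q is in the Sonine space
  have hsymm : ∀ x : ℝ, -x ∈ Ioo (-lam) lam ↔ x ∈ Ioo (-lam) lam := by
    intro x
    simp only [mem_Ioo]
    constructor
    · rintro ⟨h1, h2⟩; exact ⟨by linarith, by linarith⟩
    · rintro ⟨h1, h2⟩; exact ⟨by linarith, by linarith⟩
  have hq_mem : q ∈ Kset lam F := by
    refine ⟨?_, ?_, ?_⟩
    · filter_upwards [hq_coe, ae_neg' hq_coe, heven, hFve] with x h1 h2 h3 h4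
      rw [h2, h1, h3, h4]
      by_cases hx : x ∈ Ioo (-lam) lam
      · rw [indicator_of_mem hx, indicator_of_mem ((hsymm x).mpr hx), h4]
      · rw [indicator_of_notMem hx,
          indicator_of_notMem (fun hc => hx ((hsymm x).mp hc))]
    · filter_upwards [hq_coe, hf0] with x h1 h2 hx
      rw [h1, indicator_of_mem hx, h2 hx, zero_sub, neg_add_cancel]
    · have hFq : F q = F f - v + F (Pproj lam (F v)) := by
        rw [hq, map_add, map_sub, FF_eq_Rop hF v, hvRop]
      filter_upwards [hFq ▸ Lp.coeFn_add (F f - v) (F (Pproj lam (F v))),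
        Lp.coeFn_sub (F f) v, hv''] with x h1 h2 h3 hx
      rw [h1, Pi.add_apply, h2, Pi.sub_apply]
      have := h3 hx
      rw [← this]
      ring
  -- f - q is orthogonal to the Sonine space
  have hq_orth : ∀ g ∈ Kset lam F, inner (𝕜 := ℂ) (f - q) g = (0 : ℂ) := by
    intro g hg
    obtain ⟨hge, hgs, hgF⟩ := hg
    have hfq : f - q = F v - Pproj lam (F v) := by rw [hq]; abel
    rw [hfq, inner_sub_left]
    have h1 : inner (𝕜 := ℂ) (Pproj lam (F v)) g = 0 := by
      apply inner_zero_of_supports lam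
      · filter_upwards [coeFn_Pproj lam (F v)] with x hx h
        rw [hx, indicator_of_notMem h]
      · exact hgs
    have h2 : inner (𝕜 := ℂ) (F v) g = 0 := by
      have hRg : Rop g = g := Rop_eq_self_of_even hge
      have hgFF : F (F g) = g := by rw [FF_eq_Rop hF, hRg]
      calc inner (𝕜 := ℂ) (F v) g = inner (𝕜 := ℂ) (F v) (F (F g)) := by rw [hgFF]
        _ = inner (𝕜 := ℂ) v (F g) := F.inner_map_map v (F g)
        _ = 0 := inner_zero_of_supports lam v (F g) hvs hgF
    rw [h1, h2, sub_zero]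
  -- uniqueness of the orthogonal projection: p = q
  have hpq : p = q := by
    have hmem : p - q ∈ Kset lam F := Kset_sub lam ⟨hpe, hps, hpF⟩ hq_mem
    have h2 : inner (𝕜 := ℂ) (f - p) (p - q) = 0 := hporth _ hmem
    have h3 : inner (𝕜 := ℂ) (f - q) (p - q) = 0 := hq_orth _ hmem
    have h4 : inner (𝕜 := ℂ) (p - q) (p - q) = (0 : ℂ) := by
      have h5 : (f - q) - (f - p) = p - q := by abel
      calc inner (𝕜 := ℂ) (p - q) (p - q)
          = inner (𝕜 := ℂ) ((f - q) - (f - p)) (p - q) := by rw [h5]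
        _ = inner (𝕜 := ℂ) (f - q) (p - q) - inner (𝕜 := ℂ) (f - p) (p - q) :=
            inner_sub_left _ _ _
        _ = 0 := by rw [h2, h3, sub_zero]
    have := inner_self_eq_zero.mp h4
    exact sub_eq_zero.mp this
  constructor
  · rw [hpq]
    filter_upwards [hq_coe] with t ht hlt
    rw [ht]
    have hnot : t ∉ Ioo (-lam) lam := by
      intro hc
      rw [mem_Ioo] at hc
      have : |t| < lam := abs_lt.mpr ⟨by linarith [hc.1], hc.2⟩
      linarith
    rw [indicator_of_notMem hnot, add_zero]
  · rw [hpq]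
    exact hq_mem.2.1
end
end
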